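/- arXiv:1406.2425 — 8 statements merged into one kernel-verified Lean document; each statement's English description precedes it below -/
import Mathlib

section
/- For every positive integers n, k, every g ∈ GL_n(ℂ) and every n×(kn) matrix X over ℂ, one has wrdet_k(gX) = (det g)^k · wrdet_k(X). -/
/-- The number of cycles of a permutation, counting fixed points as cycles. -/
def cycleCount {N : ℕ} (σ : Equiv.Perm (Fin N)) : ℕ :=
  σ.cycleType.card + (Finset.univ.filter fun x => σ x = x).card

/-- ν(σ) = N − c(σ), where c(σ) is the number of cycles of σ (fixed points counted). -/
def nuPerm {N : ℕ} (σ : Equiv.Perm (Fin N)) : ℕ := N - cycleCount σ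

/-- The alpha-determinant of a square matrix over a commutative ℚ-algebra. -/
noncomputable def adet {R : Type*} [CommRing R] [Algebra ℚ R] (α : ℚ) {N : ℕ}
    (X : Matrix (Fin N) (Fin N) R) : R :=
  ∑ σ : Equiv.Perm (Fin N),
    algebraMap ℚ R (α ^ nuPerm σ) * ∏ i, X (σ i) i

/-- The k-wreath determinant of an n × (kn) matrix: wrdet_k(X) = adet_{-1/k}(X ⊗ 1_{k,1}),
where `X ⊗ 1_{k,1}` is the kn × kn matrix in which each row of `X` is repeated `k`
consecutive times (row `i` of the blowup is row `⌊i/k⌋` of `X`). -/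
noncomputable def wrdet {R : Type*} [CommRing R] [Algebra ℚ R] (k : ℕ) {n : ℕ}
    (X : Matrix (Fin n) (Fin (n * k)) R) : R :=
  adet (-(1 : ℚ) / k) (Matrix.of fun i j : Fin (n * k) => X i.divNat j)

open Finset Equiv Equiv.Perm

lemma perm_apply_inv_self {α : Type*} (σ : Perm α) (x : α) : σ (σ⁻¹ x) = x :=
  σ.apply_symm_apply x

section CycleAux

variable {N k : ℕ}

lemma fixedCard_eq (σ : Perm (Fin N)) :
    (Finset.univ.filter fun x => σ x = x).card = N - σ.support.card := by
  have : (Finset.univ.filter fun x => σ x = x) = σ.supportᶜ := by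
    ext x; simp [Equiv.Perm.mem_support]
  rw [this, Finset.card_compl, Fintype.card_fin]

lemma card_le_sum_cycleType (σ : Perm (Fin N)) :
    Multiset.card σ.cycleType ≤ σ.cycleType.sum := by
  have := Multiset.card_nsmul_le_sum (s := σ.cycleType) (a := 1)
    (fun x hx => le_trans (by norm_num) (Equiv.Perm.two_le_of_mem_cycleType hx))
  simpa using this

lemma nuPerm_eq (σ : Perm (Fin N)) :
    nuPerm σ = σ.cycleType.sum - Multiset.card σ.cycleType := by
  have h1 := card_le_sum_cycleType σ
  have h2 : σ.cycleType.sum = σ.support.card := Equiv.Perm.sum_cycleType σ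
  have h3 : σ.support.card ≤ N := by
    simpa using Finset.card_le_card (Finset.subset_univ σ.support)
  rw [nuPerm, cycleCount, fixedCard_eq]
  omega

lemma sign_eq_nuPerm (σ : Perm (Fin N)) :
    ((Equiv.Perm.sign σ : ℤ) : ℂ) = (-1 : ℂ) ^ nuPerm σ := by
  have h1 := card_le_sum_cycleType σ
  have : Equiv.Perm.sign σ = (-1 : ℤˣ) ^ (σ.cycleType.sum + Multiset.card σ.cycleType) :=
    Equiv.Perm.sign_of_cycleType σ
  rw [this, nuPerm_eq]
  have : σ.cycleType.sum + Multiset.card σ.cycleType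
      = (σ.cycleType.sum - Multiset.card σ.cycleType) + 2 * Multiset.card σ.cycleType := by omega
  rw [this, pow_add]
  push_cast
  rw [pow_mul]
  norm_num

lemma invariant_const_on_sameCycle {σ : Perm (Fin N)} {φ : Fin N → Fin k}
    (hφ : ∀ x, φ (σ x) = φ x) {x y : Fin N} (h : σ.SameCycle x y) : φ y = φ x := by
  have key : ∀ m : ℕ, φ ((σ ^ m) x) = φ x := by
    intro m
    induction m with
    | zero => simp
    | succ m ih =>
        rw [pow_succ']
        have h2 : (σ * σ ^ m) x = σ ((σ ^ m) x) := rfl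
        rw [h2, hφ, ih]
  obtain ⟨i, hi, hfix⟩ := h.exists_pow_eq'
  rw [← hfix]
  exact key i

lemma support_nonempty_of_mem_factors {σ c : Perm (Fin N)} (hc : c ∈ σ.cycleFactorsFinset) :
    c.support.Nonempty := by
  obtain ⟨x, hx, -⟩ := (Equiv.Perm.mem_cycleFactorsFinset_iff.mp hc).1
  exact ⟨x, Equiv.Perm.mem_support.mpr hx⟩

noncomputable def invariantEquiv (σ : Perm (Fin N)) (k : ℕ) :
    {φ : Fin N → Fin k // ∀ x, φ (σ x) = φ x} ≃
      (({c // c ∈ σ.cycleFactorsFinset} → Fin k) × ({x : Fin N // σ x = x} → Fin k)) where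
  toFun φ := (fun c => φ.1 (c.1.support.min' (support_nonempty_of_mem_factors c.2)),
              fun x => φ.1 x.1)
  invFun p := ⟨fun x =>
      if hx : σ x = x then p.2 ⟨x, hx⟩
      else p.1 ⟨σ.cycleOf x, (Equiv.Perm.cycleOf_mem_cycleFactorsFinset_iff).mpr
        (Equiv.Perm.mem_support.mpr hx)⟩, by
    intro x
    by_cases hx : σ x = x
    · simp only [hx]
    · have hσx : σ (σ x) ≠ σ x := fun h => hx (σ.injective h)
      simp only [dif_neg hσx, dif_neg hx]
      exact congrArg p.1 (Subtype.ext (σ.cycleOf_self_apply x))⟩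
  left_inv := by
    intro φ
    apply Subtype.ext
    funext x
    by_cases hx : σ x = x
    · simp only [dif_pos hx]
    · simp only [dif_neg hx]
      have hy := Finset.min'_mem ((σ.cycleOf x).support)
        (support_nonempty_of_mem_factors ((Equiv.Perm.cycleOf_mem_cycleFactorsFinset_iff).mpr
          (Equiv.Perm.mem_support.mpr hx)))
      exact invariant_const_on_sameCycle φ.2 (Equiv.Perm.mem_support_cycleOf_iff.mp hy).1
  right_inv := by
    intro p
    refine Prod.ext ?_ ?_
    · funext c
      have hm := Finset.min'_mem (c.1.support) (support_nonempty_of_mem_factors c.2)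
      set m := c.1.support.min' (support_nonempty_of_mem_factors c.2) with hmdef
      have hcm : c.1 m = σ m := (Equiv.Perm.mem_cycleFactorsFinset_iff.mp c.2).2 m hm
      have hσm : ¬ σ m = m := by
        rw [← hcm]; exact Equiv.Perm.mem_support.mp hm
      simp only [dif_neg hσm]
      rw [dif_neg hσm]
      refine congrArg p.1 (Subtype.ext ?_)
      exact (Equiv.Perm.cycle_is_cycleOf hm c.2).symm
    · funext x
      simp only [dif_pos x.2]

lemma card_invariant_eq (σ : Perm (Fin N)) :
    Fintype.card {φ : Fin N → Fin k // ∀ x, φ (σ x) = φ x} = k ^ cycleCount σ := by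
  rw [Fintype.card_congr (invariantEquiv σ k), Fintype.card_prod, Fintype.card_fun,
    Fintype.card_fun, Fintype.card_fin]
  have h1 : Fintype.card {c // c ∈ σ.cycleFactorsFinset} = Multiset.card σ.cycleType := by
    rw [Fintype.card_coe, Equiv.Perm.cycleType_def, Multiset.card_map]
    rfl
  have h2 : Fintype.card {x : Fin N // σ x = x}
      = (Finset.univ.filter fun x => σ x = x).card := Fintype.card_subtype _
  rw [h1, h2, cycleCount, pow_add]

lemma sum_ite_invariant (σ : Perm (Fin N)) :
    ((k : ℂ)) ^ cycleCount σ
      = ∑ φ : Fin N → Fin k, (if ∀ x, φ (σ x) = φ x then (1:ℂ) else 0) := by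
  rw [Finset.sum_boole]
  rw [← Fintype.card_subtype, card_invariant_eq]
  push_cast
  ring

lemma cycleCount_le (σ : Perm (Fin N)) : cycleCount σ ≤ N := by
  have h1 := card_le_sum_cycleType σ
  have h2 := Equiv.Perm.sum_cycleType σ
  have h3 : σ.support.card ≤ N := by
    simpa using Finset.card_le_card (Finset.subset_univ σ.support)
  rw [cycleCount, fixedCard_eq]
  omega

noncomputable def FF {N : ℕ} (k : ℕ) (f : Fin N → Fin N → ℂ) : ℂ :=
  ∑ σ : Perm (Fin N), algebraMap ℚ ℂ ((-(1:ℚ)/k) ^ nuPerm σ) * ∏ i, f (σ i) i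

lemma coeff_eq (hk : 0 < k) (σ : Perm (Fin N)) :
    algebraMap ℚ ℂ ((-(1:ℚ)/k) ^ nuPerm σ)
      = ((k:ℂ))⁻¹ ^ N * ((Equiv.Perm.sign σ : ℤ) : ℂ) * (k:ℂ) ^ cycleCount σ := by
  have hk0 : (k:ℂ) ≠ 0 := Nat.cast_ne_zero.mpr hk.ne'
  have hmap : algebraMap ℚ ℂ ((-(1:ℚ)/k) ^ nuPerm σ) = (-(1:ℂ)/k) ^ nuPerm σ := by
    rw [eq_ratCast]
    push_cast
    ring
  have h1 : (-(1:ℂ)/k) ^ nuPerm σ = (-1:ℂ)^nuPerm σ * ((k:ℂ)⁻¹) ^ nuPerm σ := by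
    rw [← mul_pow]
    ring_nf
  have h2 : ((k:ℂ)⁻¹) ^ nuPerm σ = (k:ℂ)⁻¹ ^ N * (k:ℂ) ^ cycleCount σ := by
    rw [nuPerm, pow_sub₀ _ (inv_ne_zero hk0) (cycleCount_le σ), inv_pow, inv_pow, inv_inv]
  rw [hmap, h1, h2, ← sign_eq_nuPerm]
  ring

lemma FF_eq (hk : 0 < k) (f : Fin N → Fin N → ℂ) :
    FF k f = (k:ℂ)⁻¹ ^ N * ∑ φ : Fin N → Fin k, ∑ σ : Perm (Fin N),
      (if ∀ x, φ (σ x) = φ x then (1:ℂ) else 0)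
        * ((Equiv.Perm.sign σ : ℤ) : ℂ) * ∏ i, f (σ i) i := by
  rw [FF]
  have step : ∀ σ : Perm (Fin N), algebraMap ℚ ℂ ((-(1:ℚ)/k) ^ nuPerm σ) * ∏ i, f (σ i) i
      = ∑ φ : Fin N → Fin k, (k:ℂ)⁻¹ ^ N *
        ((if ∀ x, φ (σ x) = φ x then (1:ℂ) else 0)
          * ((Equiv.Perm.sign σ : ℤ) : ℂ) * ∏ i, f (σ i) i) := by
    intro σ
    rw [coeff_eq hk σ, sum_ite_invariant σ, Finset.mul_sum, Finset.sum_mul]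
    exact Finset.sum_congr rfl (fun φ _ => by ring)
  calc ∑ σ : Perm (Fin N), algebraMap ℚ ℂ ((-(1:ℚ)/k) ^ nuPerm σ) * ∏ i, f (σ i) i
      = ∑ σ : Perm (Fin N), ∑ φ : Fin N → Fin k, (k:ℂ)⁻¹ ^ N *
        ((if ∀ x, φ (σ x) = φ x then (1:ℂ) else 0)
          * ((Equiv.Perm.sign σ : ℤ) : ℂ) * ∏ i, f (σ i) i) :=
        Finset.sum_congr rfl (fun σ _ => step σ)
    _ = ∑ φ : Fin N → Fin k, ∑ σ : Perm (Fin N), (k:ℂ)⁻¹ ^ N *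
        ((if ∀ x, φ (σ x) = φ x then (1:ℂ) else 0)
          * ((Equiv.Perm.sign σ : ℤ) : ℂ) * ∏ i, f (σ i) i) := Finset.sum_comm
    _ = _ := by
        rw [Finset.mul_sum]
        exact Finset.sum_congr rfl (fun φ _ => (Finset.mul_sum _ _ _).symm)

lemma FF_vanish (hk : 0 < k) (f : Fin N → Fin N → ℂ) (R : Finset (Fin N))
    (hR : k < R.card) (ρ cf : Fin N → ℂ)
    (hf : ∀ j ∈ R, ∀ x, f j x = cf j * ρ x) : FF k f = 0 := by
  rw [FF_eq hk]
  have hzero : ∀ φ : Fin N → Fin k, (∑ σ : Perm (Fin N),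
      (if ∀ x, φ (σ x) = φ x then (1:ℂ) else 0)
        * ((Equiv.Perm.sign σ : ℤ) : ℂ) * ∏ i, f (σ i) i) = 0 := by
    intro φ
    obtain ⟨a, ha, b, hb, hab, hphi⟩ := Finset.exists_ne_map_eq_of_card_lt_of_maps_to
      (t := (Finset.univ : Finset (Fin k))) (by simpa using hR)
      (fun x _ => Finset.mem_univ (φ x))
    have hswapφ : ∀ y, φ (Equiv.swap a b y) = φ y := by
      intro y
      rcases eq_or_ne y a with rfl | hya
      · rw [Equiv.swap_apply_left]; exact hphi.symm
      rcases eq_or_ne y b with rfl | hyb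
      · rw [Equiv.swap_apply_right]; exact hphi
      · rw [Equiv.swap_apply_of_ne_of_ne hya hyb]
    apply Finset.sum_ninvolution (g := fun σ => Equiv.swap a b * σ)
    · intro σ
      by_cases hσ : ∀ x, φ (σ x) = φ x
      · have hσ' : ∀ x, φ ((Equiv.swap a b * σ) x) = φ x := by
          intro x; rw [Equiv.Perm.mul_apply, hswapφ, hσ]
        rw [if_pos hσ, if_pos hσ']
        have hsign : (((Equiv.Perm.sign (Equiv.swap a b * σ)) : ℤ) : ℂ)
            = -(((Equiv.Perm.sign σ : ℤ)) : ℂ) := by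
          rw [Equiv.Perm.sign_mul, Equiv.Perm.sign_swap hab]
          push_cast
          ring
        have hpq : σ⁻¹ a ≠ σ⁻¹ b := fun h => hab (by
          have := congrArg σ h
          simpa [perm_apply_inv_self] using this)
        have hprod : ∏ i, f ((Equiv.swap a b * σ) i) i = ∏ i, f (σ i) i := by
          have key : ∀ i : Fin N, i ≠ σ⁻¹ b → i ≠ σ⁻¹ a →
              f ((Equiv.swap a b * σ) i) i = f (σ i) i := by
            intro i h1 h2
            rw [Equiv.Perm.mul_apply, Equiv.swap_apply_of_ne_of_ne]
            · intro h; exact h2 (by rw [← h]; simp)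
            · intro h; exact h1 (by rw [← h]; simp)
          rw [← Finset.prod_erase_mul Finset.univ _ (Finset.mem_univ (σ⁻¹ a)),
            ← Finset.prod_erase_mul _ _
              (Finset.mem_erase.mpr ⟨hpq.symm, Finset.mem_univ (σ⁻¹ b)⟩),
            ← Finset.prod_erase_mul Finset.univ (fun i => f (σ i) i) (Finset.mem_univ (σ⁻¹ a)),
            ← Finset.prod_erase_mul _ (fun i => f (σ i) i)
              (Finset.mem_erase.mpr ⟨hpq.symm, Finset.mem_univ (σ⁻¹ b)⟩)]
          have e1 : ∏ i ∈ ((Finset.univ.erase (σ⁻¹ a)).erase (σ⁻¹ b)),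
              f ((Equiv.swap a b * σ) i) i
              = ∏ i ∈ ((Finset.univ.erase (σ⁻¹ a)).erase (σ⁻¹ b)), f (σ i) i := by
            refine Finset.prod_congr rfl (fun i hi => ?_)
            have h1 := Finset.mem_erase.mp hi
            have h2 := Finset.mem_erase.mp h1.2
            exact key i h1.1 h2.1
          have hq : (Equiv.swap a b * σ) (σ⁻¹ b) = a := by
            rw [Equiv.Perm.mul_apply, perm_apply_inv_self, Equiv.swap_apply_right]
          have hp : (Equiv.swap a b * σ) (σ⁻¹ a) = b := by
            rw [Equiv.Perm.mul_apply, perm_apply_inv_self, Equiv.swap_apply_left]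
          have hσq : σ (σ⁻¹ b) = b := perm_apply_inv_self σ b
          have hσp : σ (σ⁻¹ a) = a := perm_apply_inv_self σ a
          rw [e1, mul_assoc, mul_assoc]
          congr 1
          rw [hq, hp, hσq, hσp, hf a ha, hf b hb, hf a ha, hf b hb]
          ring
        rw [hsign, hprod]
        ring
      · have hσ' : ¬ ∀ x, φ ((Equiv.swap a b * σ) x) = φ x := by
          intro hcon
          apply hσ
          intro x
          have := hcon x
          rwa [Equiv.Perm.mul_apply, hswapφ] at this
        rw [if_neg hσ, if_neg hσ']
        ring
    · intro σ _
      intro h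
      have : Equiv.swap a b = 1 := by
        have := congrArg (fun τ => τ * σ⁻¹) h
        simpa [mul_assoc] using this
      exact hab (by simpa using (congrArg (fun τ : Perm (Fin N) => τ a) this).symm)
    · intro σ; exact Finset.mem_univ _
    · intro σ; rw [← mul_assoc, Equiv.swap_mul_self, one_mul]
  rw [Finset.sum_eq_zero (fun φ _ => hzero φ), mul_zero]

lemma FF_expand (u v : Fin N → Fin N → ℂ) :
    FF k (fun j x => u j x + v j x)
      = ∑ T : Finset (Fin N), FF k (fun j x => if j ∈ T then v j x else u j x) := by
  have step : ∀ σ : Perm (Fin N), (∏ i, (u (σ i) i + v (σ i) i))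
      = ∑ T : Finset (Fin N), ∏ i, (if σ i ∈ T then v (σ i) i else u (σ i) i) := by
    intro σ
    have e0 : (∏ i, (u (σ i) i + v (σ i) i)) = ∏ i, (v (σ i) i + u (σ i) i) :=
      Finset.prod_congr rfl (fun i _ => add_comm _ _)
    rw [e0, Finset.prod_add, ← Finset.powerset_univ]
    have e1 : ∀ t : Finset (Fin N),
        ((∏ i ∈ t, v (σ i) i) * ∏ i ∈ Finset.univ \ t, u (σ i) i)
          = ∏ i, (if i ∈ t then v (σ i) i else u (σ i) i) := by
      intro t
      rw [Finset.prod_ite]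
      congr 1
      · apply Finset.prod_congr _ (fun i _ => rfl)
        ext i; simp
      · apply Finset.prod_congr _ (fun i _ => rfl)
        ext i; simp
    rw [Finset.sum_congr rfl (fun t _ => e1 t), Finset.powerset_univ]
    apply Fintype.sum_equiv (Equiv.finsetCongr σ)
    intro t
    apply Finset.prod_congr rfl
    intro i _
    have : σ i ∈ t.map σ.toEmbedding ↔ i ∈ t := Finset.mem_map' σ.toEmbedding
    simp only [Equiv.finsetCongr_apply]
    by_cases hi : i ∈ t
    · rw [if_pos hi]; simp [hi]
    · rw [if_neg hi]; simp [hi]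
  rw [FF]
  calc ∑ σ : Perm (Fin N), algebraMap ℚ ℂ ((-(1:ℚ)/k) ^ nuPerm σ)
        * ∏ i, (u (σ i) i + v (σ i) i)
      = ∑ σ : Perm (Fin N), ∑ T : Finset (Fin N), algebraMap ℚ ℂ ((-(1:ℚ)/k) ^ nuPerm σ)
        * ∏ i, (if σ i ∈ T then v (σ i) i else u (σ i) i) := by
        refine Finset.sum_congr rfl (fun σ _ => ?_)
        rw [step σ, Finset.mul_sum]
    _ = ∑ T : Finset (Fin N), ∑ σ : Perm (Fin N), algebraMap ℚ ℂ ((-(1:ℚ)/k) ^ nuPerm σ)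
        * ∏ i, (if σ i ∈ T then v (σ i) i else u (σ i) i) := Finset.sum_comm
    _ = _ := rfl

lemma FF_zero_row (f : Fin N → Fin N → ℂ) (j : Fin N) (hf : ∀ x, f j x = 0) :
    FF k f = 0 := by
  rw [FF]
  apply Finset.sum_eq_zero
  intro σ _
  have : ∏ i, f (σ i) i = 0 :=
    Finset.prod_eq_zero (Finset.mem_univ (σ⁻¹ j))
      (by rw [perm_apply_inv_self]; exact hf _)
  rw [this, mul_zero]

end CycleAux

section Fiber

def fiberEmb (n k : ℕ) (i : Fin n) : Fin k ↪ Fin (n*k) where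
  toFun j := ⟨i.1 * k + j.1, by
    have h2 : i.1 * k + k ≤ n * k := by
      have h3 : i.1 + 1 ≤ n := i.isLt
      calc i.1 * k + k = (i.1 + 1) * k := by ring
        _ ≤ n * k := Nat.mul_le_mul_right k h3
    omega⟩
  inj' j1 j2 h := by
    apply Fin.ext
    have h2 : i.1 * k + j1.1 = i.1 * k + j2.1 := congrArg Fin.val h
    omega

lemma divNat_fiber_eq (n k : ℕ) (hk : 0 < k) (i : Fin n) :
    (Finset.univ.filter fun j : Fin (n*k) => j.divNat = i)
      = Finset.map (fiberEmb n k i) Finset.univ := by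
  ext x
  simp only [Finset.mem_filter, Finset.mem_univ, true_and, Finset.mem_map]
  constructor
  · intro h
    refine ⟨⟨x.1 % k, Nat.mod_lt _ hk⟩, ?_⟩
    have hdiv : x.1 / k = i.1 := by
      have h2 := congrArg Fin.val h
      rwa [Fin.coe_divNat] at h2
    apply Fin.ext
    show i.1 * k + x.1 % k = x.1
    have hmod := Nat.div_add_mod x.1 k
    rw [hdiv] at hmod
    rw [Nat.mul_comm i.1 k]
    omega
  · rintro ⟨j, rfl⟩
    apply Fin.ext
    rw [Fin.coe_divNat]
    show (i.1 * k + j.1) / k = i.1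
    rw [Nat.add_comm, Nat.add_mul_div_right _ _ hk, Nat.div_eq_of_lt j.isLt, Nat.zero_add]

lemma divNat_fiber_card (n k : ℕ) (hk : 0 < k) (i : Fin n) :
    (Finset.univ.filter fun j : Fin (n*k) => j.divNat = i).card = k := by
  rw [divNat_fiber_eq n k hk i, Finset.card_map, Finset.card_univ, Fintype.card_fin]

end Fiber

section Wrdet

variable {n k : ℕ}

lemma wrdet_eq_FF (k : ℕ) {n : ℕ} (X : Matrix (Fin n) (Fin (n * k)) ℂ) :
    wrdet k X = FF k (fun j x => X j.divNat x) := rfl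

lemma wrdet_diagonal_mul (hk : 0 < k) (d : Fin n → ℂ) (X : Matrix (Fin n) (Fin (n * k)) ℂ) :
    wrdet k (Matrix.diagonal d * X) = (∏ i, d i) ^ k * wrdet k X := by
  rw [wrdet_eq_FF, wrdet_eq_FF, FF, FF, Finset.mul_sum]
  apply Finset.sum_congr rfl
  intro σ _
  have h0 : ∀ (j : Fin (n*k)) (x : Fin (n*k)), (Matrix.diagonal d * X) j.divNat x
      = d j.divNat * X j.divNat x := by
    intro j x
    rw [Matrix.diagonal_mul]
  have h1 : (∏ i : Fin (n*k), (Matrix.diagonal d * X) (σ i).divNat i)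
      = (∏ i : Fin (n*k), d (σ i).divNat) * ∏ i : Fin (n*k), X (σ i).divNat i := by
    rw [← Finset.prod_mul_distrib]
    exact Finset.prod_congr rfl (fun i _ => h0 (σ i) i)
  have h2 : (∏ i : Fin (n*k), d (σ i).divNat) = ∏ i : Fin (n*k), d i.divNat :=
    Equiv.prod_comp σ (fun i => d i.divNat)
  have h3 : (∏ i : Fin (n*k), d i.divNat) = (∏ i, d i) ^ k := by
    rw [← Finset.prod_fiberwise_of_maps_to (t := Finset.univ) (g := Fin.divNat)
      (fun x _ => Finset.mem_univ _) (fun x => d x.divNat), ← Finset.prod_pow]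
    apply Finset.prod_congr rfl
    intro i _
    have : ∀ x ∈ Finset.univ.filter fun j : Fin (n*k) => j.divNat = i,
        d x.divNat = d i := by
      intro x hx
      rw [(Finset.mem_filter.mp hx).2]
    rw [Finset.prod_congr rfl this, Finset.prod_const, divNat_fiber_card n k hk i]
  rw [h1, h2, h3]
  ring

lemma wrdet_transvection_mul (hk : 0 < k) {i0 j0 : Fin n} (hij : i0 ≠ j0) (cc : ℂ)
    (X : Matrix (Fin n) (Fin (n * k)) ℂ) :
    wrdet k (Matrix.transvection i0 j0 cc * X) = wrdet k X := by
  rw [wrdet_eq_FF, wrdet_eq_FF]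
  have hstd : ∀ (a : Fin n) (x : Fin (n*k)),
      (Matrix.single i0 j0 cc * X) a x = if a = i0 then cc * X j0 x else 0 := by
    intro a x
    rw [Matrix.mul_apply]
    by_cases ha : a = i0
    · subst ha
      rw [if_pos rfl, Finset.sum_eq_single j0]
      · rw [Matrix.single_apply_same]
      · intro l _ hl
        rw [Matrix.single_apply_of_ne a j0 cc a l (fun h => hl h.2.symm), zero_mul]
      · intro h; exact absurd (Finset.mem_univ _) h
    · rw [if_neg ha]
      apply Finset.sum_eq_zero
      intro l _
      rw [Matrix.single_apply_of_ne i0 j0 cc a l (fun h => ha h.1.symm), zero_mul]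
  have hentry : (fun (j : Fin (n*k)) (x : Fin (n*k)) =>
        (Matrix.transvection i0 j0 cc * X) j.divNat x)
      = fun j x => X j.divNat x + (if j.divNat = i0 then cc * X j0 x else 0) := by
    funext j x
    rw [Matrix.transvection, Matrix.add_mul, Matrix.one_mul, Matrix.add_apply, hstd]
  rw [hentry, FF_expand]
  rw [Finset.sum_eq_single ∅]
  · apply congrArg
    funext j x
    simp
  · intro T _ hT
    by_cases hTsub : ∀ j ∈ T, j.divNat = i0
    · refine FF_vanish hk _ (T ∪ (Finset.univ.filter fun j : Fin (n*k) => j.divNat = j0))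
        ?_ (fun x => X j0 x) (fun j => if j.divNat = i0 then cc else 1) ?_
      · have hdisj : Disjoint T (Finset.univ.filter fun j : Fin (n*k) => j.divNat = j0) := by
          rw [Finset.disjoint_left]
          intro j hjT hjF
          exact hij (by rw [← hTsub j hjT, (Finset.mem_filter.mp hjF).2])
        rw [Finset.card_union_of_disjoint hdisj, divNat_fiber_card n k hk j0]
        have : 0 < T.card := Finset.card_pos.mpr (Finset.nonempty_of_ne_empty hT)
        omega
      · intro j hj x
        by_cases hjT : j ∈ T
        · have hd : j.divNat = i0 := hTsub j hjT
          simp [hjT, hd]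
        · have hjF : j ∈ Finset.univ.filter fun j : Fin (n*k) => j.divNat = j0 := by
            rcases Finset.mem_union.mp hj with h | h
            · exact absurd h hjT
            · exact h
          have hd : j.divNat = j0 := (Finset.mem_filter.mp hjF).2
          simp [hjT, hd, Ne.symm hij]
    · push_neg at hTsub
      obtain ⟨j, hjT, hjd⟩ := hTsub
      apply FF_zero_row _ j
      intro x
      rw [if_pos hjT, if_neg hjd]
  · intro h
    exact absurd (Finset.mem_univ ∅) h

end Wrdet

/-- For every positive integers n, k, every g ∈ GL_n(ℂ) and every n×(kn) matrix X over ℂ,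
one has wrdet_k(gX) = (det g)^k · wrdet_k(X). -/
theorem wrdet_mul_GL (n k : ℕ) (hn : 0 < n) (hk : 0 < k)
    (g : GL (Fin n) ℂ) (X : Matrix (Fin n) (Fin (n * k)) ℂ) :
    wrdet k ((g : Matrix (Fin n) (Fin n) ℂ) * X)
      = (Matrix.det (g : Matrix (Fin n) (Fin n) ℂ)) ^ k * wrdet k X := by
  have key : ∀ M : Matrix (Fin n) (Fin n) ℂ, ∀ Y : Matrix (Fin n) (Fin (n * k)) ℂ,
      wrdet k (M * Y) = M.det ^ k * wrdet k Y := by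
    intro M
    refine Matrix.diagonal_transvection_induction
      (fun M => ∀ Y : Matrix (Fin n) (Fin (n * k)) ℂ,
        wrdet k (M * Y) = M.det ^ k * wrdet k Y) M ?_ ?_ ?_
    · intro D _ Y
      rw [wrdet_diagonal_mul hk D Y, Matrix.det_diagonal]
    · intro t Y
      rcases t with ⟨i, j, hij, c⟩
      rw [Matrix.TransvectionStruct.toMatrix_mk, wrdet_transvection_mul hk hij c Y,
        Matrix.det_transvection_of_ne _ _ hij, one_pow, one_mul]
    · intro A B hA hB Y
      rw [Matrix.mul_assoc, hA, hB, Matrix.det_mul, mul_pow]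
      ring
  exact key _ X
end

section
/- For every positive integers n, k, every n×(kn) matrix X over ℂ, and every permutation τ of {0,…,kn−1} satisfying ⌊τ(j)/k⌋ = ⌊j/k⌋ for all j (i.e. τ permutes the columns within each of the n consecutive blocks of size k), one has wrdet_k(X·P(τ)) = wrdet_k(X), where P(τ) is the permutation matrix with (i,j)-entry δ_{i,τ(j)}. -/
lemma cycleCount_conj {N : ℕ} (τ σ : Equiv.Perm (Fin N)) :
    cycleCount (τ * σ * τ⁻¹) = cycleCount σ := by
  unfold cycleCount
  congr 1
  · exact congrArg Multiset.card (Equiv.Perm.cycleType_conj (σ := σ) (τ := τ))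
  · apply Finset.card_bij' (fun a _ => τ⁻¹ a) (fun a _ => τ a)
    · intro a ha
      simp only [Finset.mem_filter, Finset.mem_univ, true_and] at ha ⊢
      simp only [Equiv.Perm.mul_apply] at ha
      apply τ.injective
      simpa using ha
    · intro a ha
      simp only [Finset.mem_filter, Finset.mem_univ, true_and] at ha ⊢
      simp [Equiv.Perm.mul_apply, ha]
    · intro a _; simp
    · intro a _; simp

lemma nuPerm_conj {N : ℕ} (τ σ : Equiv.Perm (Fin N)) :
    nuPerm (τ * σ * τ⁻¹) = nuPerm σ := by
  unfold nuPerm; rw [cycleCount_conj]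

/-- For every positive integers n, k, every n×(kn) matrix X over ℂ, and every
permutation τ of the columns preserving the n consecutive blocks of size k
(i.e. ⌊τ(j)/k⌋ = ⌊j/k⌋ for all j), one has wrdet_k(X·P(τ)) = wrdet_k(X),
where P(τ) is the permutation matrix with (i,j)-entry δ_{i,τ(j)}. -/
theorem wrdet_mul_blockPerm (n k : ℕ) (hn : 0 < n) (hk : 0 < k)
    (X : Matrix (Fin n) (Fin (n * k)) ℂ)
    (τ : Equiv.Perm (Fin (n * k)))
    (hτ : ∀ j : Fin (n * k), (τ j : ℕ) / k = (j : ℕ) / k) :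
    wrdet k (X * Matrix.of fun i j : Fin (n * k) => if i = τ j then (1 : ℂ) else 0)
      = wrdet k X := by
  have hdiv : ∀ j : Fin (n * k), (τ j).divNat = j.divNat := by
    intro j
    apply Fin.ext
    exact hτ j
  have hentry : ∀ (i : Fin n) (j : Fin (n * k)),
      (X * Matrix.of fun i j : Fin (n * k) => if i = τ j then (1 : ℂ) else 0) i j
        = X i (τ j) := by
    intro i j
    simp [Matrix.mul_apply, eq_comm]
  unfold wrdet adet
  refine Fintype.sum_equiv
    ⟨fun σ => τ * σ * τ⁻¹, fun σ => τ⁻¹ * σ * τ, fun σ => by group, fun σ => by group⟩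
    _ _ ?_
  intro σ
  simp only [Equiv.coe_fn_mk, nuPerm_conj]
  congr 1
  calc ∏ i, Matrix.of (fun i j : Fin (n * k) =>
          (X * Matrix.of fun i j : Fin (n * k) => if i = τ j then (1 : ℂ) else 0)
            i.divNat j) (σ i) i
      = ∏ i, X (σ i).divNat (τ i) := by
        apply Finset.prod_congr rfl
        intro i _
        simp only [Matrix.of_apply]
        exact hentry _ i
    _ = ∏ j, X ((τ * σ * τ⁻¹) j).divNat j := by
        refine Fintype.prod_equiv τ _ _ ?_
        intro i
        simp only [Equiv.Perm.mul_apply, Equiv.Perm.inv_def, Equiv.symm_apply_apply]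
        rw [hdiv]
    _ = _ := by
        apply Finset.prod_congr rfl
        intro j _
        simp
end

section
/- Let n, k be positive integers and let g be a permutation of {0,…,kn−1} of wreath-product form: there exist σ ∈ S_n and τ_0,…,τ_{n−1} ∈ S_k such that g(ik+j) = σ(i)k + τ_i(j) for all 0 ≤ i < n, 0 ≤ j < k. Then for every n×(kn) matrix X over ℂ one has wrdet_k(X·P(g)) = (sgn σ)^k · wrdet_k(X), where P(g) is the permutation matrix with (i,j)-entry δ_{i,g(j)}. -/
/-- The element `i*k + j` of `Fin (n*k)`: position `j` inside the `i`-th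
consecutive block of size `k`. -/
def blockIdx {n k : ℕ} (i : Fin n) (j : Fin k) : Fin (n * k) :=
  ⟨(i : ℕ) * k + j, by
    calc (i : ℕ) * k + (j : ℕ) < (i : ℕ) * k + k := Nat.add_lt_add_left j.isLt _
      _ = ((i : ℕ) + 1) * k := by ring
      _ ≤ n * k := Nat.mul_le_mul_right k i.isLt⟩

set_option maxHeartbeats 1000000
section WDauxSection
open Equiv Matrix Finset

namespace WDaux

variable {N k : ℕ}

lemma inv_pow_apply {β : Type*} (ρ : Equiv.Perm (Fin N)) (φ : Fin N → β)
    (h : φ ∘ ρ = φ) : ∀ (j : ℕ) (x : Fin N), φ ((ρ ^ j) x) = φ x := by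
  intro j
  induction j with
  | zero => intro x; simp
  | succ j ih =>
    intro x
    rw [pow_succ, Equiv.Perm.mul_apply]
    rw [ih (ρ x)]; exact congrFun h x

lemma inv_zpow_apply {β : Type*} (ρ : Equiv.Perm (Fin N)) (φ : Fin N → β)
    (h : φ ∘ ρ = φ) : ∀ (j : ℤ) (x : Fin N), φ ((ρ ^ j) x) = φ x := by
  intro j x
  cases j with
  | ofNat m => rw [Int.ofNat_eq_coe, zpow_natCast]; exact inv_pow_apply ρ φ h m x
  | negSucc m =>
    rw [zpow_negSucc]
    have := inv_pow_apply ρ φ h (m+1) (((ρ ^ (m+1))⁻¹) x)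
    simpa using this.symm

lemma sameCycle_eq {β : Type*} (ρ : Equiv.Perm (Fin N)) (φ : Fin N → β)
    (h : φ ∘ ρ = φ) {x y : Fin N} (hxy : ρ.SameCycle x y) : φ x = φ y := by
  obtain ⟨j, hj⟩ := hxy
  rw [← hj, inv_zpow_apply ρ φ h]


noncomputable def pt {ρ : Equiv.Perm (Fin N)} (c : {c // c ∈ ρ.cycleFactorsFinset}) : Fin N :=
  ((Equiv.Perm.mem_cycleFactorsFinset_iff.mp c.2).1.nonempty_support).choose

lemma pt_mem {ρ : Equiv.Perm (Fin N)} (c : {c // c ∈ ρ.cycleFactorsFinset}) :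
    pt c ∈ (c.1).support :=
  ((Equiv.Perm.mem_cycleFactorsFinset_iff.mp c.2).1.nonempty_support).choose_spec

lemma pt_not_fixed {ρ : Equiv.Perm (Fin N)} (c : {c // c ∈ ρ.cycleFactorsFinset}) :
    ρ (pt c) ≠ pt c := by
  have h1 := pt_mem c
  have h2 := (Equiv.Perm.mem_cycleFactorsFinset_iff.mp c.2).2 (pt c) h1
  rw [← h2]
  exact Equiv.Perm.mem_support.mp h1

lemma cycleOf_pt {ρ : Equiv.Perm (Fin N)} (c : {c // c ∈ ρ.cycleFactorsFinset}) :
    ρ.cycleOf (pt c) = c.1 :=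
  (Equiv.Perm.cycle_is_cycleOf (pt_mem c) c.2).symm

lemma sameCycle_pt {ρ : Equiv.Perm (Fin N)} {x : Fin N} (hx : ¬ ρ x = x) :
    ρ.SameCycle x (pt ⟨ρ.cycleOf x, Equiv.Perm.cycleOf_mem_cycleFactorsFinset_iff.mpr
      (Equiv.Perm.mem_support.mpr hx)⟩) := by
  set c : {c // c ∈ ρ.cycleFactorsFinset} := ⟨ρ.cycleOf x,
    Equiv.Perm.cycleOf_mem_cycleFactorsFinset_iff.mpr (Equiv.Perm.mem_support.mpr hx)⟩ with hc
  have hmem := pt_mem c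
  have h2 : pt c ∈ (ρ.cycleOf x).support := hmem
  exact (Equiv.Perm.mem_support_cycleOf_iff.mp h2).1

noncomputable def fixEquiv (ρ : Equiv.Perm (Fin N)) (k : ℕ) :
    {φ : Fin N → Fin k // φ ∘ ρ = φ} ≃
      (({c // c ∈ ρ.cycleFactorsFinset} → Fin k) × ({x : Fin N // ρ x = x} → Fin k)) where
  toFun φ := (fun c => φ.1 (pt c), fun x => φ.1 x.1)
  invFun h := ⟨fun x => if hx : ρ x = x then h.2 ⟨x, hx⟩ else
      h.1 ⟨ρ.cycleOf x, Equiv.Perm.cycleOf_mem_cycleFactorsFinset_iff.mpr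
        (Equiv.Perm.mem_support.mpr hx)⟩, by
    funext x
    simp only [Function.comp_apply]
    by_cases hx : ρ x = x
    · simp only [hx]
    · have hρx : ¬ ρ (ρ x) = ρ x := fun hc => hx (ρ.injective hc)
      rw [dif_neg hρx, dif_neg hx]
      have hcc : (⟨ρ.cycleOf (ρ x), Equiv.Perm.cycleOf_mem_cycleFactorsFinset_iff.mpr
          (Equiv.Perm.mem_support.mpr hρx)⟩ : {c // c ∈ ρ.cycleFactorsFinset})
          = ⟨ρ.cycleOf x, Equiv.Perm.cycleOf_mem_cycleFactorsFinset_iff.mpr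
          (Equiv.Perm.mem_support.mpr hx)⟩ := Subtype.ext (ρ.cycleOf_self_apply x)
      rw [hcc]⟩
  left_inv := by
    intro ⟨φ, hφ⟩
    apply Subtype.ext
    funext x
    simp only
    by_cases hx : ρ x = x
    · rw [dif_pos hx]
    · rw [dif_neg hx]
      apply sameCycle_eq ρ φ hφ
      exact (sameCycle_pt hx).symm
  right_inv := by
    intro h
    refine Prod.ext ?_ ?_
    · funext c
      simp only
      rw [dif_neg (pt_not_fixed c)]
      have hcc : (⟨ρ.cycleOf (pt c), Equiv.Perm.cycleOf_mem_cycleFactorsFinset_iff.mpr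
          (Equiv.Perm.mem_support.mpr (pt_not_fixed c))⟩ : {c // c ∈ ρ.cycleFactorsFinset}) = c :=
        Subtype.ext (cycleOf_pt c)
      rw [hcc]
    · funext x
      simp only
      rw [dif_pos x.2]


lemma card_fix (ρ : Equiv.Perm (Fin N)) (k : ℕ) :
    Fintype.card {φ : Fin N → Fin k // φ ∘ ρ = φ} = k ^ cycleCount ρ := by
  rw [Fintype.card_congr (fixEquiv ρ k), Fintype.card_prod, Fintype.card_fun, Fintype.card_fun,
    Fintype.card_coe, Fintype.card_subtype, Fintype.card_fin, ← pow_add, cycleCount]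
  congr 2
  rw [Equiv.Perm.cycleType_def, Multiset.card_map]
  rfl

lemma card_le_sum (s : Multiset ℕ) (h : ∀ x ∈ s, 1 ≤ x) : Multiset.card s ≤ s.sum := by
  induction s using Multiset.induction_on with
  | empty => simp
  | cons a s ih =>
    rw [Multiset.card_cons, Multiset.sum_cons]
    have ha := h a (Multiset.mem_cons_self a s)
    have := ih (fun x hx => h x (Multiset.mem_cons_of_mem hx))
    omega

lemma cycleCount_le (ρ : Equiv.Perm (Fin N)) : cycleCount ρ ≤ N := by
  have h1 : ρ.cycleType.card ≤ ρ.support.card := by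
    rw [← Equiv.Perm.sum_cycleType]
    exact card_le_sum _ (fun x hx => le_of_lt (Equiv.Perm.one_lt_of_mem_cycleType hx))
  have h2 : (Finset.univ.filter fun x => ρ x = x).card = N - ρ.support.card := by
    have : (Finset.univ.filter fun x => ρ x = x) = ρ.supportᶜ := by
      ext x
      simp [Equiv.Perm.mem_support]
    rw [this, Finset.card_compl]
    simp
  have h3 : ρ.support.card ≤ N := by
    simpa using Finset.card_le_card (Finset.subset_univ ρ.support)
  rw [cycleCount, h2]
  omega

lemma sign_eq_cc (ρ : Equiv.Perm (Fin N)) :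
    ((Equiv.Perm.sign ρ : ℤ) : ℂ) = (-1 : ℂ) ^ (N - cycleCount ρ) := by
  have h2 : (Finset.univ.filter fun x => ρ x = x).card = N - ρ.support.card := by
    have : (Finset.univ.filter fun x => ρ x = x) = ρ.supportᶜ := by
      ext x
      simp [Equiv.Perm.mem_support]
    rw [this, Finset.card_compl]
    simp
  have h1 : ρ.cycleType.card ≤ ρ.support.card := by
    rw [← Equiv.Perm.sum_cycleType]
    exact card_le_sum _ (fun x hx => le_of_lt (Equiv.Perm.one_lt_of_mem_cycleType hx))
  have h3 : ρ.support.card ≤ N := by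
    simpa using Finset.card_le_card (Finset.subset_univ ρ.support)
  have hs : Equiv.Perm.sign ρ = (-1 : ℤˣ) ^ (ρ.cycleType.sum + ρ.cycleType.card) :=
    Equiv.Perm.sign_of_cycleType ρ
  have hexp : N - cycleCount ρ = ρ.support.card - ρ.cycleType.card := by
    rw [cycleCount, h2]; omega
  rw [hexp, hs]
  have hsum : ρ.cycleType.sum = ρ.support.card := Equiv.Perm.sum_cycleType ρ
  rw [hsum]
  push_cast
  have : ρ.support.card + ρ.cycleType.card
      = (ρ.support.card - ρ.cycleType.card) + 2 * ρ.cycleType.card := by omega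
  rw [this, pow_add, pow_mul]
  simp

lemma coeff_eq (hk : 0 < k) (ρ : Equiv.Perm (Fin N)) :
    (k : ℂ) ^ N * algebraMap ℚ ℂ ((-(1 : ℚ)/k) ^ (N - cycleCount ρ))
      = ((Equiv.Perm.sign ρ : ℤ) : ℂ)
          * (Fintype.card {φ : Fin N → Fin k // φ ∘ ρ = φ} : ℂ) := by
  rw [card_fix ρ k, sign_eq_cc ρ]
  have hc := cycleCount_le ρ
  have hkc : (k : ℂ) ≠ 0 := Nat.cast_ne_zero.mpr hk.ne'
  rw [eq_ratCast (algebraMap ℚ ℂ)]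
  push_cast
  rw [div_pow, neg_pow]
  have hpow : (k : ℂ) ^ (N - cycleCount ρ) * (k : ℂ) ^ (cycleCount ρ) = (k : ℂ) ^ N := by
    rw [← pow_add]; congr 1; omega
  field_simp
  rw [← hpow]

lemma fiber_det_sum (φ : Fin N → Fin k) (Y : Matrix (Fin N) (Fin N) ℂ) :
    ∑ ρ : Equiv.Perm (Fin N),
        (if φ ∘ ρ = φ then ((Equiv.Perm.sign ρ : ℤ) : ℂ) * ∏ i, Y (ρ i) i else 0)
      = ∏ m : Fin k, (Matrix.of fun a b : {x : Fin N // φ x = m} => Y a.1 b.1).det := by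
  set D : Matrix (Fin N) (Fin N) ℂ :=
    Matrix.of fun x y => if φ x = φ y then Y x y else 0 with hD
  have hbt : D.BlockTriangular φ := by
    intro i j h
    exact if_neg (fun he => absurd he.symm (ne_of_lt h))
  have h1 : D.det = ∏ m : Fin k, (D.toSquareBlock φ m).det := hbt.det_fintype
  have h2 : ∀ m : Fin k, D.toSquareBlock φ m
      = Matrix.of fun a b : {x : Fin N // φ x = m} => Y a.1 b.1 := by
    intro m
    ext a b
    simp only [Matrix.toSquareBlock_def, Matrix.of_apply, hD]
    rw [if_pos (a.2.trans b.2.symm)]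
  have h3 : D.det = ∑ ρ : Equiv.Perm (Fin N),
      (if φ ∘ ρ = φ then ((Equiv.Perm.sign ρ : ℤ) : ℂ) * ∏ i, Y (ρ i) i else 0) := by
    rw [Matrix.det_apply']
    refine Finset.sum_congr rfl (fun ρ _ => ?_)
    by_cases h : φ ∘ ρ = φ
    · rw [if_pos h]
      congr 1
      refine Finset.prod_congr rfl (fun i _ => ?_)
      exact if_pos (congrFun h i)
    · rw [if_neg h]
      have : ∃ i, ¬ φ (ρ i) = φ i := by
        by_contra hc
        push_neg at hc
        exact h (funext hc)
      obtain ⟨i, hi⟩ := this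
      have : ∏ j, D (ρ j) j = 0 :=
        Finset.prod_eq_zero (Finset.mem_univ i) (if_neg hi)
      rw [this, mul_zero]
  rw [← h3, h1]
  exact Finset.prod_congr rfl (fun m _ => by rw [h2 m])


lemma key (hk : 0 < k) (Y : Matrix (Fin N) (Fin N) ℂ) :
    (k : ℂ) ^ N * adet (-(1 : ℚ)/k) Y
      = ∑ φ : Fin N → Fin k,
          ∏ m : Fin k, (Matrix.of fun a b : {x : Fin N // φ x = m} => Y a.1 b.1).det := by
  rw [adet, Finset.mul_sum]
  have step1 : ∀ ρ : Equiv.Perm (Fin N),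
      (k : ℂ) ^ N * (algebraMap ℚ ℂ ((-(1 : ℚ)/k) ^ nuPerm ρ) * ∏ i, Y (ρ i) i)
        = ∑ φ : Fin N → Fin k,
            (if φ ∘ ρ = φ then ((Equiv.Perm.sign ρ : ℤ) : ℂ) * ∏ i, Y (ρ i) i else 0) := by
    intro ρ
    rw [← mul_assoc, nuPerm, coeff_eq hk ρ]
    rw [Finset.sum_ite, Finset.sum_const, Finset.sum_const_zero, add_zero, nsmul_eq_mul,
      Fintype.card_subtype]
    ring
  rw [Finset.sum_congr rfl (fun ρ _ => step1 ρ), Finset.sum_comm]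
  exact Finset.sum_congr rfl (fun φ _ => fiber_det_sum φ Y)


lemma sign_sq (σ : Equiv.Perm (Fin n)) : ((Equiv.Perm.sign σ : ℤ) : ℂ) * ((Equiv.Perm.sign σ : ℤ) : ℂ) = 1 := by
  rcases Int.units_eq_one_or (Equiv.Perm.sign σ) with h | h <;> rw [h] <;> norm_num

lemma per_phi {n k : ℕ} (g : Equiv.Perm (Fin (n * k))) (σ : Equiv.Perm (Fin n))
    (hdg : ∀ x : Fin (n * k), (g x).divNat = σ x.divNat)
    (X : Matrix (Fin n) (Fin (n * k)) ℂ) (φ : Fin (n * k) → Fin k) :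
    (∏ m : Fin k, (Matrix.of fun a b : {x : Fin (n * k) // φ x = m} =>
        X a.1.divNat (g b.1)).det)
      = ((Equiv.Perm.sign σ : ℤ) : ℂ) ^ k
        * ∏ m : Fin k, (Matrix.of fun a b : {x : Fin (n * k) // φ (g⁻¹ x) = m} =>
            X a.1.divNat b.1).det := by
  by_cases hgood : ∀ m : Fin k,
      Function.Injective (fun a : {x : Fin (n * k) // φ x = m} => (a.1).divNat)
  · -- good case
    have hle : ∀ m : Fin k, Fintype.card {x : Fin (n * k) // φ x = m} ≤ n := by
      intro m
      have := Fintype.card_le_of_injective _ (hgood m)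
      simpa using this
    have hsum : ∑ m : Fin k, Fintype.card {x : Fin (n * k) // φ x = m} = n * k := by
      rw [← Fintype.card_sigma, Fintype.card_congr (Equiv.sigmaFiberEquiv φ)]
      simp
    have hcard : ∀ m : Fin k, Fintype.card {x : Fin (n * k) // φ x = m} = n := by
      intro m
      by_contra hne
      have hlt : Fintype.card {x : Fin (n * k) // φ x = m} < n := lt_of_le_of_ne (hle m) hne
      have : ∑ m : Fin k, Fintype.card {x : Fin (n * k) // φ x = m}
          < ∑ _m : Fin k, n :=
        Finset.sum_lt_sum (fun i _ => hle i) ⟨m, Finset.mem_univ m, hlt⟩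
      rw [hsum] at this
      simp only [Finset.sum_const, Finset.card_univ, Fintype.card_fin, smul_eq_mul] at this
      rw [Nat.mul_comm] at this
      omega
    have hm : ∀ m : Fin k,
        ((Equiv.Perm.sign σ : ℤ) : ℂ)
            * (Matrix.of fun a b : {x : Fin (n * k) // φ x = m} =>
                X a.1.divNat (g b.1)).det
          = (Matrix.of fun a b : {x : Fin (n * k) // φ (g⁻¹ x) = m} =>
              X a.1.divNat b.1).det := by
      intro m
      have hbij : Function.Bijective (fun a : {x : Fin (n * k) // φ x = m} => (a.1).divNat) :=
        (Fintype.bijective_iff_injective_and_card _).mpr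
          ⟨hgood m, by rw [hcard m, Fintype.card_fin]⟩
      set e : {x : Fin (n * k) // φ x = m} ≃ Fin n := Equiv.ofBijective _ hbij with he
      set t : {x : Fin (n * k) // φ x = m} ≃ {x : Fin (n * k) // φ (g⁻¹ x) = m} :=
        Equiv.subtypeEquiv (g : Fin (n * k) ≃ Fin (n * k))
          (fun a => by rw [Equiv.Perm.inv_def, Equiv.symm_apply_apply]) with ht
      set c : {x : Fin (n * k) // φ (g⁻¹ x) = m} ≃ Fin n := t.symm.trans e with hc
      set A : Matrix (Fin n) (Fin n) ℂ :=
        Matrix.of fun i i' : Fin n => X i (g (e.symm i').1) with hA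
      have claim1 : (Matrix.of fun a b : {x : Fin (n * k) // φ x = m} =>
          X a.1.divNat (g b.1)) = A.submatrix e e := by
        ext a b
        simp only [Matrix.submatrix_apply, Matrix.of_apply, hA]
        rw [Equiv.symm_apply_apply]
        rfl
      have hcsymm : ∀ i : Fin n, c.symm i = t (e.symm i) := fun i => rfl
      have hca : ∀ a : {x : Fin (n * k) // φ (g⁻¹ x) = m}, a.1 = g ((e.symm (c a)).1) := by
        intro a
        conv_lhs => rw [← c.symm_apply_apply a]
        rfl
      have claim2 : (Matrix.of fun a b : {x : Fin (n * k) // φ (g⁻¹ x) = m} =>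
          X a.1.divNat b.1) = (A.submatrix σ id).submatrix c c := by
        ext a b
        simp only [Matrix.submatrix_apply, Matrix.of_apply, hA, id_eq]
        rw [hca a, hca b, hdg]
        congr 2
        exact e.apply_symm_apply (c a)
      rw [claim1, claim2, Matrix.det_submatrix_equiv_self e,
        Matrix.det_submatrix_equiv_self c, Matrix.det_permute]
    have hprod : ∏ m : Fin k, (Matrix.of fun a b : {x : Fin (n * k) // φ (g⁻¹ x) = m} =>
        X a.1.divNat b.1).det
        = ((Equiv.Perm.sign σ : ℤ) : ℂ) ^ k
          * ∏ m : Fin k, (Matrix.of fun a b : {x : Fin (n * k) // φ x = m} =>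
              X a.1.divNat (g b.1)).det := by
      rw [← Finset.prod_congr rfl (fun m _ => hm m), Finset.prod_mul_distrib,
        Finset.prod_const, Finset.card_univ, Fintype.card_fin]
    rw [hprod, ← mul_assoc, ← mul_pow, sign_sq, one_pow, one_mul]
  · -- bad case
    push_neg at hgood
    obtain ⟨m, hm⟩ := hgood
    rw [Function.not_injective_iff] at hm
    obtain ⟨a, b, hd, hab⟩ := hm
    have hleft : (Matrix.of fun a b : {x : Fin (n * k) // φ x = m} =>
        X a.1.divNat (g b.1)).det = 0 := by
      apply Matrix.det_zero_of_row_eq hab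
      funext b'
      simp only [Matrix.of_apply]
      rw [hd]
    have hright : (Matrix.of fun a b : {x : Fin (n * k) // φ (g⁻¹ x) = m} =>
        X a.1.divNat b.1).det = 0 := by
      have ha' : φ (g⁻¹ (g a.1)) = m := by rw [Equiv.Perm.inv_def, Equiv.symm_apply_apply]; exact a.2
      have hb' : φ (g⁻¹ (g b.1)) = m := by rw [Equiv.Perm.inv_def, Equiv.symm_apply_apply]; exact b.2
      have hne : (⟨g a.1, ha'⟩ : {x : Fin (n * k) // φ (g⁻¹ x) = m}) ≠ ⟨g b.1, hb'⟩ := by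
        intro h
        exact hab (Subtype.ext (g.injective (congrArg Subtype.val h)))
      apply Matrix.det_zero_of_row_eq hne
      funext b'
      simp only [Matrix.of_apply]
      rw [hdg, hdg, hd]
    rw [Finset.prod_eq_zero (Finset.mem_univ m) hleft,
      Finset.prod_eq_zero (Finset.mem_univ m) hright, mul_zero]


lemma blockIdx_divNat {n k : ℕ} (hk : 0 < k) (i : Fin n) (j : Fin k) :
    (blockIdx i j).divNat = i := by
  apply Fin.ext
  show ((i : ℕ) * k + j) / k = i
  rw [Nat.mul_comm (i : ℕ) k, Nat.mul_add_div hk, Nat.div_eq_of_lt j.isLt, Nat.add_zero]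

lemma blockIdx_div_mod {n k : ℕ} (x : Fin (n * k)) :
    blockIdx x.divNat x.modNat = x := by
  apply Fin.ext
  show ((x : ℕ) / k) * k + (x : ℕ) % k = x
  rw [Nat.mul_comm]
  exact Nat.div_add_mod _ _

end WDaux

end WDauxSection

/-- Let g be a permutation of {0,…,kn−1} of wreath-product form: g(ik+j) = σ(i)k + τ_i(j)
for some σ ∈ S_n and τ_0,…,τ_{n−1} ∈ S_k. Then for every n×(kn) matrix X over ℂ,
wrdet_k(X·P(g)) = (sgn σ)^k · wrdet_k(X). -/
theorem wrdet_mul_wreathPerm (n k : ℕ) (hn : 0 < n) (hk : 0 < k)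
    (g : Equiv.Perm (Fin (n * k)))
    (σ : Equiv.Perm (Fin n)) (τ : Fin n → Equiv.Perm (Fin k))
    (hg : ∀ (i : Fin n) (j : Fin k), g (blockIdx i j) = blockIdx (σ i) (τ i j))
    (X : Matrix (Fin n) (Fin (n * k)) ℂ) :
    wrdet k (X * Matrix.of fun a b : Fin (n * k) => if a = g b then (1 : ℂ) else 0)
      = ((Equiv.Perm.sign σ : ℤ) : ℂ) ^ k * wrdet k X := by
  have hdg : ∀ x : Fin (n * k), (g x).divNat = σ x.divNat := by
    intro x
    conv_lhs => rw [← WDaux.blockIdx_div_mod x, hg]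
    rw [WDaux.blockIdx_divNat hk]
  have hXP : ∀ (i : Fin n) (c : Fin (n * k)),
      (X * Matrix.of fun a b : Fin (n * k) => if a = g b then (1 : ℂ) else 0) i c
        = X i (g c) := by
    intro i c
    rw [Matrix.mul_apply]
    simp only [Matrix.of_apply, mul_ite, mul_one, mul_zero]
    rw [Finset.sum_ite_eq' Finset.univ (g c) (fun b => X i b)]
    simp
  have hkN : ((k : ℂ) ^ (n * k)) ≠ 0 := pow_ne_zero _ (Nat.cast_ne_zero.mpr hk.ne')
  apply mul_left_cancel₀ hkN
  rw [wrdet, wrdet, WDaux.key hk, mul_left_comm, WDaux.key hk, Finset.mul_sum]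
  calc
    ∑ φ : Fin (n * k) → Fin k, ∏ m : Fin k,
        (Matrix.of fun a b : {x : Fin (n * k) // φ x = m} =>
          (Matrix.of fun i j : Fin (n * k) =>
            (X * Matrix.of fun a b : Fin (n * k) =>
              if a = g b then (1 : ℂ) else 0) i.divNat j) a.1 b.1).det
      = ∑ φ : Fin (n * k) → Fin k, ∏ m : Fin k,
          (Matrix.of fun a b : {x : Fin (n * k) // φ x = m} =>
            X a.1.divNat (g b.1)).det := by
        refine Finset.sum_congr rfl (fun φ _ => Finset.prod_congr rfl (fun m _ => ?_))
        congr 1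
        ext a b
        simp only [Matrix.of_apply]
        exact hXP _ _
    _ = ∑ φ : Fin (n * k) → Fin k, ((Equiv.Perm.sign σ : ℤ) : ℂ) ^ k
          * ∏ m : Fin k, (Matrix.of fun a b : {x : Fin (n * k) // φ (g⁻¹ x) = m} =>
              X a.1.divNat b.1).det := by
        exact Finset.sum_congr rfl (fun φ _ => WDaux.per_phi g σ hdg X φ)
    _ = ∑ φ : Fin (n * k) → Fin k, ((Equiv.Perm.sign σ : ℤ) : ℂ) ^ k
          * ∏ m : Fin k, (Matrix.of fun a b : {x : Fin (n * k) // φ x = m} =>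
              X a.1.divNat b.1).det := by
        have hbij : Function.Bijective
            (fun φ : Fin (n * k) → Fin k => φ ∘ (⇑(g⁻¹) : Fin (n * k) → Fin (n * k))) := by
          constructor
          · intro φ1 φ2 h
            funext x
            have := congrFun h (g x)
            simpa using this
          · intro ψ
            refine ⟨ψ ∘ ⇑g, funext fun x => ?_⟩
            simp
        exact Fintype.sum_bijective _ hbij _ _ (fun φ => rfl)
    _ = ∑ φ : Fin (n * k) → Fin k, ((Equiv.Perm.sign σ : ℤ) : ℂ) ^ k
          * ∏ m : Fin k, (Matrix.of fun a b : {x : Fin (n * k) // φ x = m} =>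
              (Matrix.of fun i j : Fin (n * k) => X i.divNat j) a.1 b.1).det := rfl
end

section
/- Let n, k be positive integers and m = kn. Then over ℂ[x] one has the matrix factorization T(m,n;x) = P(σ) · (T(n;x^k) ⊗ 1_{1,k}) · (I_n ⊗ diag(x^{k−1}, x^{k−2}, …, x, 1)) · P(τ)^{−1}, where σ is the n-cycle i ↦ (i+1) mod n of {0,…,n−1}, τ is the m-cycle j ↦ (j+1) mod m of {0,…,m−1}, P(ρ) denotes the permutation matrix with (i,j)-entry δ_{i,ρ(j)}, 1_{1,k} is the 1×k all-ones matrix, and ⊗ denotes the Kronecker product. -/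
/-- `Tmat m n x` is the n×m matrix over ℂ[x] with (i,j)-entry x^{((k·i − j) mod m)}
for 0 ≤ i < n, 0 ≤ j < m, where k = m/n (so m = kn when n divides m). -/
noncomputable def Tmat (m n : ℕ) (x : Polynomial ℂ) : Matrix (Fin n) (Fin m) (Polynomial ℂ) :=
  Matrix.of fun i j => x ^ ((((m / n : ℕ) * (i : ℕ) : ℤ) - (j : ℕ)) % (m : ℤ)).toNat

/-- Kronecker product with flat indices: for A of size a×b and B of size c×d,
(A ⊗ B)(i,j) = A(⌊i/c⌋, ⌊j/d⌋) · B(i mod c, j mod d). -/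
def kron {R : Type*} [Mul R] {a b c d : ℕ}
    (A : Matrix (Fin a) (Fin b) R) (B : Matrix (Fin c) (Fin d) R) :
    Matrix (Fin (a * c)) (Fin (b * d)) R :=
  Matrix.of fun i j => A i.divNat j.divNat * B i.modNat j.modNat

/-- The permutation matrix P(ρ) with (i,j)-entry δ_{i,ρ(j)}. -/
noncomputable def Pmat {N : ℕ} (ρ : Equiv.Perm (Fin N)) : Matrix (Fin N) (Fin N) (Polynomial ℂ) :=
  Matrix.of fun i j => if i = ρ j then 1 else 0

lemma key_emod (n k : ℕ) (hn : 0 < n) (hk : 0 < k) (t s : ℤ) (h0 : 0 ≤ s) (hs : s < k) :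
    ((k : ℤ) * t + s) % (n * k) = k * (t % n) + s := by
  have hn' : (0:ℤ) < n := by exact_mod_cast hn
  have h1 : (k:ℤ) * t + s = k * (t % n) + s + ((n:ℤ) * k) * (t / n) := by
    rw [Int.emod_def]; ring
  rw [h1, Int.add_mul_emod_self_left]
  apply Int.emod_eq_of_lt
  · have := Int.emod_nonneg t (ne_of_gt hn')
    positivity
  · have h2 : t % n ≤ (n:ℤ) - 1 := by
      have := Int.emod_lt_of_pos t hn'; omega
    have hk' : (0:ℤ) < k := by exact_mod_cast hk
    nlinarith [h2, hk', hs]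

lemma finRotate_val {N : ℕ} (i : Fin N) : ((finRotate N i : Fin N) : ℕ) = ((i:ℕ)+1) % N := by
  cases N with
  | zero => exact i.elim0
  | succ N =>
    rw [finRotate_succ_apply]
    simp [Fin.add_def, Nat.add_mod_mod]

lemma arith (n k i i₀ j j₀ : ℕ) (hn : 0 < n) (hk : 0 < k)
    (hi : i < n) (hi₀ : i₀ < n) (hj : j < n*k) (hj₀ : j₀ < n*k)
    (hI : (i₀ + 1) % n = i) (hJ : (j₀ + 1) % (n*k) = j) :
    (((k : ℤ) * i - j) % (n*k)).toNat
      = k * (((i₀ : ℤ) - ((j₀/k : ℕ) : ℤ)) % n).toNat + (k - 1 - j₀ % k) := by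
  have hn' : (0:ℤ) < n := by exact_mod_cast hn
  have hk' : (0:ℤ) < k := by exact_mod_cast hk
  set q := j₀ / k with hq
  set r := j₀ % k with hr
  have hrk : r < k := Nat.mod_lt _ hk
  have hqr : k * q + r = j₀ := Nat.div_add_mod j₀ k
  set b : ℤ := ((i₀ : ℤ) - (q : ℤ)) % n with hb
  have hb0 : 0 ≤ b := Int.emod_nonneg _ (ne_of_gt hn')
  have him : (i:ℤ) % n = i := Int.emod_eq_of_lt (by positivity) (by exact_mod_cast hi)
  -- modular relation for i
  have h1 : ((i₀:ℤ) + 1) % n = (i:ℤ) % n := by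
    have h := congrArg (Nat.cast : ℕ → ℤ) hI
    rw [Int.natCast_mod] at h
    push_cast at h
    rw [h, him]
  have crux : ((k : ℤ) * i - j) % (n*k) = k * b + ((k - 1 - r : ℕ) : ℤ) := by
    have hcast : ((k - 1 - r : ℕ) : ℤ) = (k:ℤ) - 1 - r := by omega
    rcases Nat.lt_or_ge (j₀ + 1) (n*k) with hlt | hge
    · -- j = j₀ + 1
      have hjj : j = j₀ + 1 := by rw [← hJ, Nat.mod_eq_of_lt hlt]
      have e1 : (k : ℤ) * i - j = k * ((i:ℤ) - 1 - q) + ((k:ℤ) - 1 - r) := by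
        rw [hjj]
        have : (j₀ : ℤ) = k * q + r := by exact_mod_cast hqr.symm
        push_cast [this]; ring
      rw [e1, key_emod n k hn hk _ _ (by omega) (by omega), hcast]
      congr 2
      have hm : (i₀ : ℤ) ≡ (i:ℤ) - 1 [ZMOD n] := by
        have h2 : ((i₀:ℤ) + 1) ≡ (i:ℤ) [ZMOD n] := h1
        simpa using h2.sub_right 1
      exact (hm.sub_right (q:ℤ)).symm
    · -- j₀ + 1 = n*k, j = 0
      have heq : j₀ + 1 = n*k := by omega
      have hj0 : j = 0 := by rw [← hJ, heq, Nat.mod_self]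
      have h3 : k*(n-1) + (k-1) + 1 = n*k := by
        rw [mul_comm n k]
        have h4 : k*((n-1)+1) = k*n := by rw [Nat.sub_add_cancel hn]
        have h5 : k*((n-1)+1) = k*(n-1) + k := by ring
        omega
      have hj₀' : j₀ = k*(n-1) + (k-1) := by omega
      have hqv : q = n - 1 := by
        rw [hq, hj₀', Nat.mul_add_div hk, Nat.div_eq_of_lt (by omega)]
        omega
      have hrv : r = k - 1 := by
        rw [hr, hj₀', Nat.mul_add_mod, Nat.mod_eq_of_lt (by omega)]
      have hbv : b = (i : ℤ) := by
        rw [hb, hqv]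
        have e2 : ((i₀:ℤ) - ((n-1:ℕ):ℤ)) = ((i₀:ℤ) + 1) - n := by omega
        rw [e2]
        have e3 : ((i₀:ℤ) + 1 - n) % n = ((i₀:ℤ) + 1) % n := by
          conv_rhs => rw [show ((i₀:ℤ)+1) = ((i₀:ℤ)+1-n) + (n:ℤ)*1 by ring]
          rw [Int.add_mul_emod_self_left]
        rw [e3, h1, him]
      rw [hj0, hbv, hrv]
      have e4 : (k:ℤ) * i - ((0:ℕ):ℤ) = (k:ℤ) * i + 0 := by push_cast; ring
      rw [e4, key_emod n k hn hk _ _ le_rfl hk', him]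
      simp
  -- conclude
  have hfin : (k:ℤ) * b + ((k - 1 - r : ℕ) : ℤ) = ((k * b.toNat + (k-1-r) : ℕ) : ℤ) := by
    push_cast [Int.toNat_of_nonneg hb0]; ring
  rw [crux, hfin, Int.toNat_natCast]

open Matrix Polynomial in
lemma Pmat_mul_Pmat {N : ℕ} (ρ : Equiv.Perm (Fin N)) : Pmat ρ * Pmat ρ⁻¹ = 1 := by
  ext i j : 1
  simp [Pmat, Matrix.mul_apply, Matrix.one_apply, Equiv.eq_symm_apply, eq_comm]
  refine Eq.trans ?_ (Equiv.sum_comp ρ (fun x => if j = x then (if i = x then (1 : Polynomial ℂ) else 0) else 0)).symm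
  simp [eq_comm]

lemma Pmat_inv {N : ℕ} (ρ : Equiv.Perm (Fin N)) : (Pmat ρ)⁻¹ = Pmat ρ⁻¹ :=
  Matrix.inv_eq_right_inv (Pmat_mul_Pmat ρ)

lemma mul_Pmat_apply {N a : ℕ} (M : Matrix (Fin a) (Fin N) (Polynomial ℂ)) (ρ : Equiv.Perm (Fin N))
    (i : Fin a) (j : Fin N) : (M * Pmat ρ) i j = M i (ρ j) := by
  simp [Pmat, Matrix.mul_apply]

lemma Pmat_mul_apply {N a : ℕ} (M : Matrix (Fin N) (Fin a) (Polynomial ℂ)) (ρ : Equiv.Perm (Fin N))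
    (i : Fin N) (j : Fin a) : (Pmat ρ * M) i j = M (ρ⁻¹ i) j := by
  simp only [Pmat, Matrix.mul_apply, Matrix.of_apply, ite_mul, one_mul, zero_mul]
  rw [Finset.sum_eq_single (ρ⁻¹ i)]
  · simp
  · intro b _ hb
    rw [if_neg]
    intro h
    exact hb (by simp [h])
  · simp

lemma fin_eq_of_div_mod {a c : ℕ} (b d : Fin (a * c)) (h1 : b.divNat = d.divNat)
    (h2 : b.modNat = d.modNat) : b = d := by
  have e1 : (b:ℕ)/c = (d:ℕ)/c := by
    rw [← Fin.coe_divNat, ← Fin.coe_divNat, h1]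
  have e2 : (b:ℕ)%c = (d:ℕ)%c := by
    rw [← Fin.coe_modNat, ← Fin.coe_modNat, h2]
  have hb := Nat.div_add_mod (b:ℕ) c
  have hd := Nat.div_add_mod (d:ℕ) c
  rw [e1, e2] at hb
  exact Fin.ext (by omega)


/-- The factorization
T(m,n;x) = P(σ) · (T(n;x^k) ⊗ 1_{1,k}) · (I_n ⊗ diag(x^{k−1},…,x,1)) · P(τ)^{−1},
where m = kn, σ is the n-cycle i ↦ i+1 (mod n) and τ the m-cycle j ↦ j+1 (mod m). -/
theorem Tmat_factorization (n k : ℕ) (hn : 0 < n) (hk : 0 < k) :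
    Tmat (n * k) n Polynomial.X
      = Pmat (finRotate n)
        * Matrix.reindex (finCongr (Nat.mul_one n)) (Equiv.refl (Fin (n * k)))
            (kron (Tmat n n (Polynomial.X ^ k))
              (Matrix.of fun (_ : Fin 1) (_ : Fin k) => (1 : Polynomial ℂ) : Matrix (Fin 1) (Fin k) (Polynomial ℂ)))
        * kron (1 : Matrix (Fin n) (Fin n) (Polynomial ℂ))
            (Matrix.diagonal fun j : Fin k => Polynomial.X ^ (k - 1 - (j : ℕ)))
        * (Pmat (finRotate (n * k)))⁻¹ := by

  rw [Pmat_inv]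
  refine Matrix.ext fun i j => ?_
  rw [mul_Pmat_apply, Matrix.mul_apply]
  set j₀ : Fin (n*k) := (finRotate (n*k))⁻¹ j with hj₀def
  rw [Finset.sum_eq_single j₀]
  · rw [Pmat_mul_apply]
    set i₀ : Fin n := (finRotate n)⁻¹ i with hi₀def
    simp only [Tmat, kron, Matrix.reindex_apply, Matrix.submatrix_apply, finCongr_symm,
      finCongr_apply, Equiv.refl_symm, Equiv.refl_apply, Matrix.of_apply, Matrix.one_apply_eq,
      Matrix.diagonal_apply_eq, mul_one, one_mul, ← pow_mul, ← pow_add]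
    have hm1 : n*k/n = k := Nat.mul_div_cancel_left k hn
    have hm2 : n/n = 1 := Nat.div_self hn
    have hd : ((Fin.cast (Nat.mul_one n).symm i₀).divNat : ℕ) = (i₀ : ℕ) := by
      rw [Fin.coe_divNat]; simp
    have hjd : (j₀.divNat : ℕ) = (j₀:ℕ)/k := Fin.coe_divNat _
    have hjm : (j₀.modNat : ℕ) = (j₀:ℕ)%k := Fin.coe_modNat _
    have hI : ((i₀:ℕ)+1) % n = (i:ℕ) := by
      rw [← finRotate_val, hi₀def, ← Equiv.Perm.mul_apply, mul_inv_cancel, Equiv.Perm.one_apply]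
    have hJ : ((j₀:ℕ)+1) % (n*k) = (j:ℕ) := by
      rw [← finRotate_val, hj₀def, ← Equiv.Perm.mul_apply, mul_inv_cancel, Equiv.Perm.one_apply]
    have A := arith n k i i₀ j j₀ hn hk i.isLt i₀.isLt j.isLt j₀.isLt hI hJ
    congr 1
    rw [hm1, hm2, hd, hjd, hjm]
    push_cast at A ⊢
    rw [one_mul]
    exact A
  · intro b _ hb
    apply mul_eq_zero_of_right
    show kron _ _ b j₀ = 0
    simp only [kron, Matrix.of_apply]
    rcases eq_or_ne b.divNat j₀.divNat with h1 | h1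
    · rcases eq_or_ne b.modNat j₀.modNat with h2 | h2
      · exact absurd (fin_eq_of_div_mod b j₀ h1 h2) hb
      · rw [Matrix.diagonal_apply_ne _ h2, mul_zero]
    · rw [Matrix.one_apply_ne h1, zero_mul]
  · intro h; exact absurd (Finset.mem_univ _) h
end

section
/- Let l ≥ 1 and let m_1,…,m_l and n_1,…,n_l be positive integers with n_s dividing m_s for each s. Put k_s = m_s/n_s, M_s = ∏_{i<s} m_i, N_s = ∏_{i<s} n_i, m = ∏_s m_s, n = ∏_s n_s. Define ε(i,j) = ∑_{s=1}^l M_s · ((k_s⌊i/N_s⌋ − ⌊j/M_s⌋) mod m_s) for 0 ≤ i < n, 0 ≤ j < m. Then the n×m matrix over ℂ[q] with (i,j)-entry q^{ε(i,j)} equals the Kronecker product T(m_l,n_l;q^{M_l}) ⊗ T(m_{l−1},n_{l−1};q^{M_{l−1}}) ⊗ ⋯ ⊗ T(m_1,n_1;q^{M_1}). -/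
/-- Iterated Kronecker product A_{l-1} ⊗ A_{l-2} ⊗ ⋯ ⊗ A_0 (the factor with the
largest index on the left), with flat indices. -/
noncomputable def kronIter {R : Type*} [CommRing R] (ns ms : ℕ → ℕ)
    (A : (s : ℕ) → Matrix (Fin (ns s)) (Fin (ms s)) R) :
    (l : ℕ) → Matrix (Fin (∏ s ∈ Finset.range l, ns s)) (Fin (∏ s ∈ Finset.range l, ms s)) R
  | 0 => Matrix.reindex (finCongr (by simp)) (finCongr (by simp)) (1 : Matrix (Fin 1) (Fin 1) R)
  | (l + 1) =>
      Matrix.reindex (finCongr (by rw [Finset.prod_range_succ, Nat.mul_comm]))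
        (finCongr (by rw [Finset.prod_range_succ, Nat.mul_comm]))
        (kron (A l) (kronIter ns ms A l))


lemma term_key (M k nC X Y D W Z : ℤ) (h : M ∣ k * nC) :
    (k * (nC * X + Y) - (M * D * W + Z)) % M = (k * Y - Z) % M := by
  obtain ⟨c, hc⟩ := h
  have h2 : k * (nC * X + Y) - (M * D * W + Z) = (k * Y - Z) + M * (c * X - D * W) := by
    linear_combination X * hc
  rw [h2, Int.add_mul_emod_self_left]

lemma div_decomp (i P Pl c : ℕ) (hP : 0 < P) (h : Pl = P * c) :
    i / P = c * (i / Pl) + (i % Pl) / P := by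
  conv_lhs => rw [← Nat.div_add_mod i Pl]
  rw [h, mul_assoc, Nat.mul_add_div hP, mul_comm c]

lemma prod_decomp (f : ℕ → ℕ) (s l : ℕ) (hs : s < l) :
    ∃ C, ∏ t ∈ Finset.range l, f t = (∏ t ∈ Finset.range s, f t) * (f s * C) := by
  obtain ⟨d, rfl⟩ := Nat.exists_eq_add_of_lt hs
  refine ⟨∏ t ∈ Finset.range d, f (s + 1 + t), ?_⟩
  rw [show s + d + 1 = (s + 1) + d by omega, Finset.prod_range_add, Finset.prod_range_succ]
  ring

/-- For n_s | m_s (s = 1,…,l), with k_s = m_s/n_s, M_s = ∏_{i<s} m_i, N_s = ∏_{i<s} n_i,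
the n×m matrix with (i,j)-entry q^{ε(i,j)}, where
ε(i,j) = ∑_s M_s ((k_s⌊i/N_s⌋ − ⌊j/M_s⌋) mod m_s), equals the Kronecker product
T(m_l,n_l;q^{M_l}) ⊗ ⋯ ⊗ T(m_1,n_1;q^{M_1}). -/
theorem abelian_matrix_kronecker (l : ℕ) (hl : 1 ≤ l) (ms ns : ℕ → ℕ)
    (hpos : ∀ s < l, 0 < ms s ∧ 0 < ns s ∧ ns s ∣ ms s) :
    (Matrix.of fun (i : Fin (∏ s ∈ Finset.range l, ns s))
        (j : Fin (∏ s ∈ Finset.range l, ms s)) =>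
      (Polynomial.X : Polynomial ℂ) ^
        (∑ s ∈ Finset.range l,
          (∏ t ∈ Finset.range s, ms t) *
            (((((ms s / ns s : ℕ) * ((i : ℕ) / ∏ t ∈ Finset.range s, ns t) : ℕ) : ℤ)
                - (((j : ℕ) / ∏ t ∈ Finset.range s, ms t : ℕ) : ℤ)) % (ms s : ℤ)).toNat))
      = kronIter ns ms
          (fun s => Tmat (ms s) (ns s) (Polynomial.X ^ (∏ t ∈ Finset.range s, ms t))) l := by
  clear hl
  revert hpos
  induction l with
  | zero =>
    intro _
    refine Matrix.ext fun i j => ?_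
    simp only [Finset.range_zero, Finset.sum_empty, pow_zero, Matrix.of_apply, kronIter,
      Matrix.reindex_apply, Matrix.submatrix_apply, Matrix.one_apply]
    exact (if_pos (Subsingleton.elim _ _)).symm
  | succ l ih =>
    intro hpos
    have hpos' : ∀ s < l, 0 < ms s ∧ 0 < ns s ∧ ns s ∣ ms s :=
      fun s hs => hpos s (Nat.lt_succ_of_lt hs)
    have ih' := ih hpos'
    refine Matrix.ext fun i j => ?_
    simp only [kronIter, Matrix.reindex_apply, Matrix.submatrix_apply, kron, Matrix.of_apply,
      ← ih']
    simp only [Tmat, Matrix.of_apply, finCongr_symm, finCongr_apply, Fin.coe_divNat,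
      Fin.coe_modNat, Fin.coe_cast]
    rw [← pow_mul, ← pow_add, Finset.sum_range_succ, add_comm]
    refine congrArg (fun e : ℕ => (Polynomial.X : Polynomial ℂ) ^ e) ?_
    refine congrArg₂ (fun a b : ℕ => a + b) ?_ ?_
    · norm_cast
    · refine Finset.sum_congr rfl fun s hs => ?_
      have hsl : s < l := Finset.mem_range.mp hs
      have hPs : 0 < ∏ t ∈ Finset.range s, ns t :=
        Finset.prod_pos fun t ht =>
          (hpos t ((Finset.mem_range.mp ht).trans (hsl.trans (Nat.lt_succ_self l)))).2.1
      have hQs : 0 < ∏ t ∈ Finset.range s, ms t :=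
        Finset.prod_pos fun t ht =>
          (hpos t ((Finset.mem_range.mp ht).trans (hsl.trans (Nat.lt_succ_self l)))).1
      obtain ⟨C, hC⟩ := prod_decomp ns s l hsl
      obtain ⟨D, hD⟩ := prod_decomp ms s l hsl
      congr 2
      rw [div_decomp (i : ℕ) _ _ _ hPs hC, div_decomp (j : ℕ) _ _ _ hQs hD]
      have hk : ((ms s : ℤ) / (ns s : ℤ)) * (ns s : ℤ) = (ms s : ℤ) :=
        Int.ediv_mul_cancel
          (Int.natCast_dvd_natCast.mpr (hpos s (hsl.trans (Nat.lt_succ_self l))).2.2)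
      push_cast
      exact term_key _ _ _ _ _ _ _ _ ⟨(C : ℤ), by linear_combination (C : ℤ) * hk⟩
end

section
/- Let n ≥ 2 and k ≥ 1 be integers, and let X = (x_{ij}) be the n×n matrix of independent indeterminates over ℚ. Then the coefficient of the monomial (x_{11}x_{22}⋯x_{nn})^{k−1} · x_{12}x_{23}⋯x_{n−1,n}x_{n1} in the polynomial (det X)^k equals (−1)^{n−1}·k. -/
open MvPolynomial Finset Equiv

noncomputable def eg (N k : ℕ) (g : Fin k → Equiv.Perm (Fin (N+2))) : (Fin (N+2) × Fin (N+2)) →₀ ℕ :=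
  ∑ t, ∑ i, Finsupp.single (i, g t i) 1

lemma eg_apply {N k : ℕ} (g : Fin k → Equiv.Perm (Fin (N+2))) (a b : Fin (N+2)) :
    eg N k g (a, b) = (univ.filter fun t => g t a = b).card := by
  classical
  rw [eg, Finsupp.finset_sum_apply, Finset.card_filter]
  refine Finset.sum_congr rfl fun t _ => ?_
  rw [Finsupp.finset_sum_apply]
  rw [Finset.sum_eq_single a]
  · simp [Finsupp.single_apply, Prod.ext_iff]
  · intro i _ hi
    simp [Finsupp.single_apply, Prod.ext_iff, hi]
  · simp

noncomputable def Mon (N k : ℕ) : (Fin (N+2) × Fin (N+2)) →₀ ℕ :=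
  Finsupp.equivFunOnFinite.symm fun p : Fin (N+2) × Fin (N+2) =>
    if p.1 = p.2 then k - 1
    else if (p.2 : ℕ) = ((p.1 : ℕ) + 1) % (N+2) then 1 else 0

lemma val_cond {N : ℕ} (a b : Fin (N+2)) :
    ((b : ℕ) = ((a : ℕ) + 1) % (N+2)) ↔ b = a + 1 := by
  rw [Fin.ext_iff, Fin.val_add, Fin.val_one]

lemma succ_ne {N : ℕ} (a : Fin (N+2)) : a + 1 ≠ a := by
  simp [eq_comm, left_eq_add]

lemma Mon_apply {N k : ℕ} (a b : Fin (N+2)) :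
    Mon N k (a, b) = if a = b then k - 1 else if b = a + 1 then 1 else 0 := by
  rw [Mon]
  simp only [Finsupp.equivFunOnFinite_symm_apply_apply, val_cond]

def G (N k : ℕ) (t0 : Fin k) : Fin k → Equiv.Perm (Fin (N+2)) :=
  fun t => if t = t0 then finRotate (N+2) else 1

lemma eg_G {N k : ℕ} (t0 : Fin k) : eg N k (G N k t0) = Mon N k := by
  classical
  ext p
  obtain ⟨a, b⟩ := p
  rw [eg_apply, Mon_apply]
  have hG : ∀ t, G N k t0 t a = if t = t0 then a + 1 else a := by
    intro t
    rw [G]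
    split <;> simp [finRotate_succ_apply]
  by_cases hab : a = b
  · subst hab
    rw [if_pos rfl]
    have : (univ.filter fun t => G N k t0 t a = a) = univ.erase t0 := by
      ext t
      simp only [mem_filter, mem_univ, true_and, mem_erase, hG]
      split
      · simp_all [succ_ne a]
      · simp_all
    rw [this, Finset.card_erase_of_mem (mem_univ _), Finset.card_univ, Fintype.card_fin]
  · by_cases hb : b = a + 1
    · subst hb
      rw [if_neg hab, if_pos rfl]
      have : (univ.filter fun t => G N k t0 t a = a + 1) = {t0} := by
        ext t
        simp only [mem_filter, mem_univ, true_and, mem_singleton, hG]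
        split
        · simp_all
        · simp_all [Ne.symm (succ_ne a)]
      rw [this, Finset.card_singleton]
    · rw [if_neg hab, if_neg hb]
      have : (univ.filter fun t => G N k t0 t a = b) = ∅ := by
        ext t
        simp only [mem_filter, mem_univ, true_and, Finset.notMem_empty, iff_false, hG]
        split
        · exact fun h => hb h.symm
        · exact fun h => hab h
      rw [this, Finset.card_empty]

open Fin.NatCast in
lemma eg_eq_Mon {N k : ℕ} {g : Fin k → Equiv.Perm (Fin (N+2))}
    (hg : eg N k g = Mon N k) : ∃ t0, g = G N k t0 := by
  classical
  have happ : ∀ a b, (univ.filter fun t => g t a = b).card = Mon N k (a, b) := by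
    intro a b
    rw [← eg_apply, hg]
  have h1 : ∀ t a, g t a = a ∨ g t a = a + 1 := by
    intro t a
    by_contra hc
    push_neg at hc
    have h0 := happ a (g t a)
    rw [Mon_apply, if_neg (fun h => hc.1 h.symm), if_neg hc.2] at h0
    rw [Finset.card_eq_zero, Finset.eq_empty_iff_forall_notMem] at h0
    exact h0 t (by simp)
  have h3 : ∀ t, g t = 1 ∨ g t = finRotate (N+2) := by
    intro t
    by_cases hex : ∃ a, g t a = a + 1
    · right
      obtain ⟨a, ha⟩ := hex
      have key : ∀ j : ℕ, g t (a + j) = a + j + 1 := by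
        intro j
        induction j with
        | zero => simpa using ha
        | succ j ih =>
            have hcast : ((j+1 : ℕ) : Fin (N+2)) = (j : Fin (N+2)) + 1 := by
              push_cast; ring
            rw [hcast, ← add_assoc]
            rcases h1 t (a + (j : Fin (N+2)) + 1) with h | h
            · exact absurd ((g t).injective (ih.trans h.symm)).symm
                (succ_ne (a + (j : Fin (N+2))))
            · exact h
      refine Equiv.ext fun b => ?_
      have hb : a + (((b - a : Fin (N+2)) : ℕ) : Fin (N+2)) = b := by
        rw [Fin.cast_val_eq_self]; abel
      rw [finRotate_succ_apply, ← hb]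
      exact key ((b - a : Fin (N+2)) : ℕ)
    · left
      push_neg at hex
      refine Equiv.ext fun b => ?_
      rcases h1 t b with h | h
      · simpa using h
      · exact absurd h (hex b)
  have h2 := happ 0 (0 + 1)
  rw [Mon_apply, if_neg (Ne.symm (succ_ne 0)), if_pos rfl, Finset.card_eq_one] at h2
  obtain ⟨t0, ht0⟩ := h2
  refine ⟨t0, funext fun t => ?_⟩
  rcases h3 t with h | h
  · have hmem : t ∉ univ.filter fun s => g s 0 = 0 + 1 := by
      simp only [mem_filter, mem_univ, true_and, h, Equiv.Perm.one_apply]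
      exact Ne.symm (succ_ne 0)
    rw [ht0, mem_singleton] at hmem
    rw [G, if_neg hmem, h]
  · have hmem : t ∈ univ.filter fun s => g s 0 = 0 + 1 := by
      simp [h, finRotate_succ_apply]
    rw [ht0, mem_singleton] at hmem
    rw [G, if_pos hmem, h]

lemma prod_X_eq {ι τ : Type*} (s : Finset ι) (f : ι → τ) :
    (∏ i ∈ s, (X (f i) : MvPolynomial τ ℚ)) = monomial (∑ i ∈ s, Finsupp.single (f i) 1) 1 := by
  classical
  induction s using Finset.cons_induction with
  | empty => simp
  | cons a s ha ih =>
      rw [Finset.prod_cons, ih, X, monomial_mul, Finset.sum_cons, one_mul]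

lemma prod_monomial {ι τ : Type*} (s : Finset ι) (e : ι → (τ →₀ ℕ)) :
    (∏ i ∈ s, (monomial (e i) (1:ℚ))) = monomial (∑ i ∈ s, e i) 1 := by
  classical
  induction s using Finset.cons_induction with
  | empty => simp
  | cons a s ha ih =>
      rw [Finset.prod_cons, ih, monomial_mul, Finset.sum_cons, one_mul]

lemma det_term_eq {n : ℕ} (σ : Equiv.Perm (Fin n)) :
    (Equiv.Perm.sign σ • ∏ i, (X (i, σ i) : MvPolynomial (Fin n × Fin n) ℚ)) =
      C ((Equiv.Perm.sign σ : ℤ) : ℚ) * monomial (∑ i, Finsupp.single (i, σ i) 1) 1 := by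
  rw [prod_X_eq, Units.smul_def, zsmul_eq_mul,
    ← map_intCast (C : ℚ →+* MvPolynomial (Fin n × Fin n) ℚ)]

lemma det_pow_coeff {N k : ℕ} (M : (Fin (N+2) × Fin (N+2)) →₀ ℕ) :
    coeff M ((Matrix.det (Matrix.of fun i j : Fin (N+2) => (X (i,j) : MvPolynomial (Fin (N+2) × Fin (N+2)) ℚ)))^k)
      = ∑ g : Fin k → Equiv.Perm (Fin (N+2)),
          if eg N k g = M then ∏ t, ((Equiv.Perm.sign (g t) : ℤ) : ℚ) else 0 := by
  classical
  rw [← Matrix.det_transpose, Matrix.det_apply]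
  have h1 : ∀ σ : Equiv.Perm (Fin (N+2)),
      (Equiv.Perm.sign σ •
        ∏ i, (Matrix.of fun i j : Fin (N+2) => (X (i,j):MvPolynomial (Fin (N+2) × Fin (N+2)) ℚ)).transpose (σ i) i)
      = C ((Equiv.Perm.sign σ : ℤ):ℚ) * monomial (∑ i, Finsupp.single (i, σ i) 1) 1 := by
    intro σ
    rw [← det_term_eq]
    rfl
  rw [Finset.sum_congr rfl fun σ _ => h1 σ, Fintype.sum_pow]
  rw [MvPolynomial.coeff_sum]
  refine Finset.sum_congr rfl fun g _ => ?_
  rw [Finset.prod_mul_distrib]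
  rw [← map_prod]
  rw [prod_monomial]
  simp only [eg, coeff_C_mul, coeff_monomial, mul_ite, mul_one, mul_zero]
  congr

/-- Let X = (x_{ij}) be the generic n×n matrix of independent indeterminates over ℚ
(n ≥ 2). The coefficient of (x_{11}⋯x_{nn})^{k−1} · x_{12}x_{23}⋯x_{n−1,n}x_{n1}
in (det X)^k equals (−1)^{n−1}·k. -/

theorem coeff_det_pow_cycle (n k : ℕ) (hn : 2 ≤ n) (hk : 1 ≤ k) :
    MvPolynomial.coeff
      (Finsupp.equivFunOnFinite.symm fun p : Fin n × Fin n =>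
        if p.1 = p.2 then k - 1
        else if (p.2 : ℕ) = ((p.1 : ℕ) + 1) % n then 1 else 0)
      ((Matrix.det (Matrix.of fun i j : Fin n =>
          (MvPolynomial.X (i, j) : MvPolynomial (Fin n × Fin n) ℚ))) ^ k)
      = (-1 : ℚ) ^ (n - 1) * k := by
  classical
  obtain ⟨N, rfl⟩ : ∃ N, n = N + 2 := ⟨n - 2, by omega⟩
  have hM : (Finsupp.equivFunOnFinite.symm fun p : Fin (N+2) × Fin (N+2) =>
      if p.1 = p.2 then k - 1
      else if (p.2 : ℕ) = ((p.1 : ℕ) + 1) % (N+2) then 1 else 0) = Mon N k := rfl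
  rw [hM, det_pow_coeff, ← Finset.sum_filter]
  have hfilt : univ.filter (fun g => eg N k g = Mon N k) = Finset.image (G N k) univ := by
    ext g
    simp only [mem_filter, mem_univ, true_and, Finset.mem_image]
    constructor
    · intro h
      obtain ⟨t0, rfl⟩ := eg_eq_Mon h
      exact ⟨t0, rfl⟩
    · rintro ⟨t0, rfl⟩
      exact eg_G t0
  have hGinj : ∀ x ∈ (univ : Finset (Fin k)), ∀ y ∈ univ, G N k x = G N k y → x = y := by
    intro t0 _ t1 _ h
    by_contra hne
    have h2 := congrFun h t0
    rw [G, G, if_pos rfl, if_neg hne] at h2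
    have h3 := congrArg (fun σ : Equiv.Perm (Fin (N+2)) => σ 0) h2
    simp only [finRotate_succ_apply, Equiv.Perm.coe_one, id_eq] at h3
    exact succ_ne 0 h3
  rw [hfilt, Finset.sum_image hGinj]
  have hsig : ∀ t0 : Fin k,
      (∏ t, ((Equiv.Perm.sign (G N k t0 t) : ℤ) : ℚ)) = (-1 : ℚ)^(N+1) := by
    intro t0
    rw [Finset.prod_eq_single t0]
    · rw [G, if_pos rfl, sign_finRotate]
      push_cast
      ring
    · intro t _ ht
      rw [G, if_neg ht]
      simp
    · simp
  rw [Finset.sum_congr rfl fun t0 _ => hsig t0, Finset.sum_const, Finset.card_univ,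
    Fintype.card_fin, nsmul_eq_mul]
  have : N + 2 - 1 = N + 1 := rfl
  rw [this, mul_comm]
end

section
/- Let k ≥ 1 and n ≥ 2 be integers and m = kn. Let K be the subgroup of the symmetric group S_m on {0,…,m−1} consisting of all permutations g with ⌊g(j)/k⌋ = ⌊j/k⌋ for all j (so K ≅ S_k^n, permuting within the n consecutive blocks of size k), and let τ ∈ S_m be the m-cycle j ↦ (j+1) mod m. Then the index of K ∩ τ^{−1}Kτ in K equals k^n. -/
/-- The subgroup K ≅ S_k^n of the symmetric group on {0,…,nk−1} consisting of the
permutations preserving each of the n consecutive blocks of size k. -/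
def blockSubgroup (n k : ℕ) : Subgroup (Equiv.Perm (Fin (n * k))) where
  carrier := {g | ∀ j : Fin (n * k), (g j : ℕ) / k = (j : ℕ) / k}
  one_mem' := fun _ => rfl
  mul_mem' := by
    intro a b ha hb j
    have h : (a * b) j = a (b j) := rfl
    rw [h, ha, hb]
  inv_mem' := by
    intro a ha j
    have h := ha (a⁻¹ j)
    simpa using h.symm

namespace BlockAux

variable {k n : ℕ}

/-- The block index of `j`. -/
def divn (hk : 1 ≤ k) (j : Fin (n * k)) : Fin n :=
  ⟨(j : ℕ) / k, Nat.div_lt_of_lt_mul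
    (calc (j : ℕ) < n * k := j.2
      _ = k * n := Nat.mul_comm n k)⟩

/-- The top point of block `i`. -/
def topF (hk : 1 ≤ k) (i : Fin n) : Fin (n * k) :=
  ⟨i * k + (k - 1), by
    have h1 : (i : ℕ) * k + (k - 1) < (i + 1) * k := by
      have h2 : ((i : ℕ) + 1) * k = i * k + k := by ring
      omega
    exact lt_of_lt_of_le h1 (Nat.mul_le_mul_right k i.2)⟩

lemma val_topF (hk : 1 ≤ k) (i : Fin n) : (topF hk i : ℕ) = i * k + (k - 1) := rfl

lemma div_topF (hk : 1 ≤ k) (i : Fin n) : ((topF hk i : ℕ)) / k = i := by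
  rw [val_topF, Nat.add_comm, Nat.add_mul_div_right _ _ hk,
    Nat.div_eq_of_lt (Nat.sub_lt hk Nat.one_pos), Nat.zero_add]

lemma val_finRotate {m : ℕ} (hm : 1 < m) (j : Fin m) :
    ((finRotate m) j : ℕ) = ((j : ℕ) + 1) % m := by
  obtain ⟨p, rfl⟩ : ∃ p, m = p + 1 := ⟨m - 1, by omega⟩
  rw [finRotate_succ_apply, Fin.add_def]
  simp [Fin.val_one', Nat.mod_eq_of_lt hm]

lemma key (hk : 1 ≤ k) (hn : 2 ≤ n) {g : Equiv.Perm (Fin (n * k))}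
    (hg : g ∈ blockSubgroup n k) :
    (∀ j : Fin (n * k),
      ((finRotate (n * k)) (g j) : ℕ) / k = ((finRotate (n * k)) j : ℕ) / k) ↔
      ∀ i : Fin n, g (topF hk i) = topF hk i := by
  have hm : 1 < n * k := by have := Nat.mul_le_mul hn hk; omega
  have hkn : k * n = n * k := Nat.mul_comm k n
  constructor
  · intro C i
    have hj := C (topF hk i)
    rw [val_finRotate hm, val_finRotate hm] at hj
    set s := ((g (topF hk i) : ℕ)) % k with hs
    have hsk : s < k := Nat.mod_lt _ hk
    have hdiv : ((g (topF hk i) : ℕ)) / k = i := by rw [hg, div_topF]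
    have hval : ((g (topF hk i) : ℕ)) = k * i + s := by
      conv_lhs => rw [← Nat.div_add_mod ((g (topF hk i) : ℕ)) k, hdiv]
    have hseq : s = k - 1 := by
      by_contra hne
      have hslt : s < k - 1 := by omega
      have h2 : k * ((i : ℕ) + 1) ≤ k * n := Nat.mul_le_mul_left k i.2
      have h3 : k * ((i : ℕ) + 1) = k * i + k := by ring
      have hL : (k * (i : ℕ) + s + 1) % (n * k) = k * i + s + 1 :=
        Nat.mod_eq_of_lt (by omega)
      have hL2 : (k * (i : ℕ) + s + 1) / k = i := by
        rw [Nat.add_assoc, Nat.mul_add_div (by omega), Nat.div_eq_of_lt (by omega), Nat.add_zero]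
      have htv : (i : ℕ) * k + (k - 1) + 1 = (i + 1) * k := by
        have h4 : ((i : ℕ) + 1) * k = i * k + k := by ring
        omega
      rw [hval, hL, hL2, val_topF, htv] at hj
      rcases Nat.lt_or_ge ((i : ℕ) + 1) n with hlt | hge
      · have h5 : ((i : ℕ) + 1) * k < n * k := by
          have h6 := Nat.mul_le_mul_right k (show (i : ℕ) + 2 ≤ n by omega)
          have h7 : ((i : ℕ) + 2) * k = (i + 1) * k + k := by ring
          omega
        have h8 : ((i : ℕ) + 1) * k / k = (i : ℕ) + 1 := by
          rw [Nat.mul_comm, Nat.mul_div_cancel_left _ (show 0 < k by omega)]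
        rw [Nat.mod_eq_of_lt h5, h8] at hj
        omega
      · have hieq : (i : ℕ) + 1 = n := by have := i.2; omega
        rw [hieq, Nat.mod_self, Nat.zero_div] at hj
        omega
    apply Fin.ext
    rw [hval, hseq, val_topF, Nat.mul_comm k (i : ℕ)]
  · intro F j
    rw [val_finRotate hm, val_finRotate hm]
    have hjlt : (j : ℕ) < n * k := j.2
    set i : Fin n := divn hk j with hidef
    have hival : (i : ℕ) = (j : ℕ) / k := rfl
    set r := (j : ℕ) % k with hr
    have hrk : r < k := Nat.mod_lt _ hk
    have hjval : (j : ℕ) = k * i + r := by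
      rw [hival, hr]; exact (Nat.div_add_mod _ k).symm
    rcases Nat.lt_or_ge r (k - 1) with hrlt | hrge
    · -- j is not a top point
      set s := ((g j : ℕ)) % k with hs
      have hsk : s < k := Nat.mod_lt _ hk
      have hdiv : ((g j : ℕ)) / k = i := by rw [hg]; rfl
      have hgval : ((g j : ℕ)) = k * i + s := by
        conv_lhs => rw [← Nat.div_add_mod ((g j : ℕ)) k, hdiv]
      have hsne : s ≠ k - 1 := by
        intro hseq
        have heq : g j = topF hk i := by
          apply Fin.ext
          rw [hgval, hseq, val_topF, Nat.mul_comm k (i : ℕ)]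
        have h2 : g j = g (topF hk i) := by rw [heq, F i]
        have h3 : j = topF hk i := g.injective h2
        have : r = k - 1 := by
          rw [hr, h3, val_topF, Nat.add_comm, Nat.add_mul_mod_self_right]
          exact Nat.mod_eq_of_lt (Nat.sub_lt hk Nat.one_pos)
        omega
      have hslt : s < k - 1 := by omega
      have hbound : ∀ t : ℕ, t < k - 1 → (k * (i : ℕ) + t + 1) % (n * k) / k = i := by
        intro t ht
        have h2 : k * ((i : ℕ) + 1) ≤ k * n := Nat.mul_le_mul_left k i.2
        have h3 : k * ((i : ℕ) + 1) = k * i + k := by ring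
        have hmod : (k * (i : ℕ) + t + 1) % (n * k) = k * i + t + 1 :=
          Nat.mod_eq_of_lt (by omega)
        rw [hmod, Nat.add_assoc, Nat.mul_add_div (by omega),
          Nat.div_eq_of_lt (by omega), Nat.add_zero]
      rw [hgval, hjval, hbound s hslt, hbound r hrlt]
    · -- j is the top point of its block
      have hreq : r = k - 1 := by omega
      have hjtop : j = topF hk i := by
        apply Fin.ext
        rw [hjval, hreq, val_topF, Nat.mul_comm k (i : ℕ)]
      rw [hjtop, F i]

end BlockAux

open BlockAux in
/-- For m = kn (k ≥ 1, n ≥ 2), K the block subgroup ≅ S_k^n of S_m, and τ the m-cycle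
j ↦ j+1 (mod m), the index [K : K ∩ τ⁻¹Kτ] equals k^n. -/
theorem relindex_blockSubgroup_conj (k n : ℕ) (hk : 1 ≤ k) (hn : 2 ≤ n) :
    ((blockSubgroup n k).map (MulAut.conj (finRotate (n * k))⁻¹).toMonoidHom).relIndex
      (blockSubgroup n k) = k ^ n := by
  have hm : 1 < n * k := by have := Nat.mul_le_mul hn hk; omega
  set K := blockSubgroup n k with hK
  set H := (blockSubgroup n k).map (MulAut.conj (finRotate (n * k))⁻¹).toMonoidHom with hH
  set x₀ : Fin n → Fin (n * k) := topF hk with hx₀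
  -- the stabilizer of x₀ in K is H.subgroupOf K
  have hstab : MulAction.stabilizer (↥K) x₀ = H.subgroupOf K := by
    ext g
    rw [MulAction.mem_stabilizer_iff, Subgroup.mem_subgroupOf, hH,
      Subgroup.mem_map_equiv]
    have hconj : (MulAut.conj (finRotate (n * k))⁻¹).symm (g : Equiv.Perm (Fin (n * k)))
        = finRotate (n * k) * (g : Equiv.Perm (Fin (n * k))) * (finRotate (n * k))⁻¹ := by
      simp [MulAut.conj]
    rw [hconj]
    have hmem : (finRotate (n * k) * (g : Equiv.Perm (Fin (n * k))) * (finRotate (n * k))⁻¹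
        ∈ blockSubgroup n k) ↔
        ∀ j : Fin (n * k),
          ((finRotate (n * k)) ((g : Equiv.Perm (Fin (n * k))) j) : ℕ) / k
            = ((finRotate (n * k)) j : ℕ) / k := by
      constructor
      · intro h j
        have := h (finRotate (n * k) j)
        simpa only [Equiv.Perm.mul_apply, Equiv.Perm.inv_def, Equiv.symm_apply_apply] using this
      · intro h j
        have := h ((finRotate (n * k))⁻¹ j)
        simpa only [Equiv.Perm.mul_apply, Equiv.Perm.inv_def, Equiv.apply_symm_apply] using this
    rw [hmem, key hk hn g.2]
    constructor
    · intro h i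
      have := congrFun h i
      simpa [hx₀, Subgroup.smul_def, Equiv.Perm.smul_def] using this
    · intro h
      funext i
      simpa [hx₀, Subgroup.smul_def, Equiv.Perm.smul_def] using h i
  have hrel : H.relIndex K = (MulAction.stabilizer (↥K) x₀).index := by
    rw [hstab]; rfl
  rw [hrel, MulAction.index_stabilizer]
  -- identify the orbit
  have horb : MulAction.orbit (↥K) x₀ = {x | ∀ i : Fin n, (x i : ℕ) / k = (i : ℕ)} := by
    ext x
    constructor
    · rintro ⟨g, rfl⟩ i
      have : ((g : Equiv.Perm (Fin (n * k))) (x₀ i) : ℕ) / k = ((x₀ i : ℕ)) / k := g.2 _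
      simpa [hx₀, div_topF, Subgroup.smul_def, Equiv.Perm.smul_def] using this
    · intro hx
      -- build the involution swapping topF i and x i in each block
      set f : Fin (n * k) → Fin (n * k) := fun j =>
        if j = topF hk (divn hk j) then x (divn hk j)
        else if j = x (divn hk j) then topF hk (divn hk j) else j with hf
      have hdivx : ∀ i : Fin n, divn hk (x i) = i := by
        intro i; apply Fin.ext; exact hx i
      have hdivt : ∀ i : Fin n, divn hk (topF hk i) = i := by
        intro i; apply Fin.ext; exact div_topF hk i
      have ha : ∀ i : Fin n, f (topF hk i) = x i := by
        intro i; simp [hf, hdivt]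
      have hb : ∀ i : Fin n, x i ≠ topF hk i → f (x i) = topF hk i := by
        intro i hne
        simp [hf, hdivx, hne]
      have hc : ∀ j, j ≠ topF hk (divn hk j) → j ≠ x (divn hk j) → f j = j := by
        intro j h1 h2
        simp [hf, h1, h2]
      have hinv : Function.Involutive f := by
        intro j
        by_cases h1 : j = topF hk (divn hk j)
        · have e1 : f j = x (divn hk j) := by rw [h1, ha, ← h1]
          rw [e1]
          by_cases h2 : x (divn hk j) = topF hk (divn hk j)
          · rw [h2, ha, h2, ← h1]
          · rw [hb _ h2, ← h1]
        · by_cases h2 : j = x (divn hk j)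
          · have e1 : f j = topF hk (divn hk j) := by
              conv_lhs => rw [h2]
              rw [hb]; intro hcon; rw [← h2] at hcon; exact h1 hcon
            rw [e1, ha, ← h2]
          · rw [hc j h1 h2, hc j h1 h2]
      set g : Equiv.Perm (Fin (n * k)) := hinv.toPerm f with hg
      have hgapp : ∀ j, g j = f j := fun j => rfl
      have hgK : g ∈ K := by
        intro j
        rw [hgapp]
        simp only [hf]
        split_ifs with h1 h2
        · exact hx _
        · exact div_topF hk _
        · rfl
      refine ⟨⟨g, hgK⟩, ?_⟩
      funext i
      show g (x₀ i) = x i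
      rw [hx₀, hgapp, ha]
  rw [horb]
  -- count the orbit
  have hcount : Nat.card ({x : Fin n → Fin (n * k) // ∀ i : Fin n, (x i : ℕ) / k = (i : ℕ)})
      = k ^ n := by
    have e1 : ({x : Fin n → Fin (n * k) // ∀ i : Fin n, (x i : ℕ) / k = (i : ℕ)}) ≃
        ∀ i : Fin n, {y : Fin (n * k) // (y : ℕ) / k = (i : ℕ)} :=
      Equiv.subtypePiEquivPi (p := fun (i : Fin n) (y : Fin (n * k)) => (y : ℕ) / k = (i : ℕ))
    have e2 : ∀ i : Fin n, {y : Fin (n * k) // (y : ℕ) / k = (i : ℕ)} ≃ Fin k := by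
      intro i
      refine ⟨fun y => ⟨(y : ℕ) % k, Nat.mod_lt _ hk⟩,
        fun r => ⟨⟨k * i + r, ?_⟩, ?_⟩, ?_, ?_⟩
      · have h2 : k * ((i : ℕ) + 1) ≤ k * n := Nat.mul_le_mul_left k i.2
        have h3 : k * ((i : ℕ) + 1) = k * i + k := by ring
        have hkn : k * n = n * k := Nat.mul_comm k n
        have h4 := r.2
        omega
      · show (k * (i : ℕ) + (r : ℕ)) / k = i
        rw [Nat.mul_add_div (by omega), Nat.div_eq_of_lt r.2, Nat.add_zero]
      · rintro ⟨y, hy⟩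
        apply Subtype.ext
        apply Fin.ext
        show k * (i : ℕ) + ((y : ℕ) % k) = y
        conv_rhs => rw [← Nat.div_add_mod ((y : ℕ)) k, hy]
      · rintro ⟨r, hr⟩
        apply Fin.ext
        show (k * (i : ℕ) + r) % k = r
        rw [Nat.mul_add_mod]
        exact Nat.mod_eq_of_lt hr
    calc Nat.card ({x : Fin n → Fin (n * k) // ∀ i : Fin n, (x i : ℕ) / k = (i : ℕ)})
        = Nat.card (∀ _ : Fin n, Fin k) :=
          Nat.card_congr (e1.trans (Equiv.piCongrRight e2))
      _ = k ^ n := by simp [Nat.card_eq_fintype_card]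
  rw [← Nat.card_coe_set_eq]
  exact hcount
end

section
/- Let n ≥ 3 be an odd integer and let (x_{ij}) be the generic n×n matrix of independent indeterminates over ℚ. Then the coefficient of the monomial ∏_{1≤i,j≤n} x_{ij} in the polynomial (det(x_{ij}))^n equals 0. -/
/-- For odd n ≥ 3, the coefficient of the monomial ∏_{i,j} x_{ij} in (det(x_{ij}))^n
(for the generic n×n matrix of indeterminates over ℚ) equals 0. -/
theorem coeff_det_pow_allOnes_eq_zero_of_odd (n : ℕ) (hn : 3 ≤ n) (hodd : Odd n) :
    MvPolynomial.coeff (Finsupp.equivFunOnFinite.symm fun _ : Fin n × Fin n => 1)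
      ((Matrix.det (Matrix.of fun i j : Fin n =>
          (MvPolynomial.X (i, j) : MvPolynomial (Fin n × Fin n) ℚ))) ^ n) = 0 := by
  have hn2 : 2 ≤ n := by omega
  set M : Matrix (Fin n) (Fin n) (MvPolynomial (Fin n × Fin n) ℚ) :=
    Matrix.of fun i j : Fin n => MvPolynomial.X (i, j) with hM
  set d : Fin n × Fin n →₀ ℕ := Finsupp.equivFunOnFinite.symm fun _ : Fin n × Fin n => 1
    with hd
  have h01 : (⟨0, by omega⟩ : Fin n) ≠ ⟨1, by omega⟩ := by
    intro h; simpa using congrArg Fin.val h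
  set s : Equiv.Perm (Fin n) := Equiv.swap ⟨0, by omega⟩ ⟨1, by omega⟩ with hs
  set e : Fin n × Fin n ≃ Fin n × Fin n := Equiv.prodCongr s (Equiv.refl _) with he
  -- rename by e sends det M to -det M
  have hdet : MvPolynomial.rename (e : Fin n × Fin n → Fin n × Fin n) M.det = -M.det := by
    have h1 : (MvPolynomial.rename (e : Fin n × Fin n → Fin n × Fin n)).toRingHom M.det
        = (M.map (MvPolynomial.rename (e : Fin n × Fin n → Fin n × Fin n))).det :=
      RingHom.map_det _ M
    have h2 : M.map (MvPolynomial.rename (e : Fin n × Fin n → Fin n × Fin n))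
        = fun i j => M (s i) j := by
      ext i j
      simp [hM, he, Matrix.map]
    have h3 : (M.submatrix (⇑s) id).det = (Equiv.Perm.sign s : ℤ) * M.det :=
      Matrix.det_permute s M
    have hsign : Equiv.Perm.sign s = -1 := Equiv.Perm.sign_swap h01
    have h2' : M.map (MvPolynomial.rename (e : Fin n × Fin n → Fin n × Fin n))
        = M.submatrix (⇑s) id := h2
    rw [show MvPolynomial.rename (e : Fin n × Fin n → Fin n × Fin n) M.det
        = (MvPolynomial.rename (e : Fin n × Fin n → Fin n × Fin n)).toRingHom M.det from rfl,
      h1, h2', h3, hsign]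
    simp
  have hdpow : MvPolynomial.rename (e : Fin n × Fin n → Fin n × Fin n) (M.det ^ n)
      = -(M.det ^ n) := by
    rw [map_pow, hdet, hodd.neg_pow]
  -- d is invariant under mapDomain e
  have hdmap : Finsupp.mapDomain (e : Fin n × Fin n → Fin n × Fin n) d = d := by
    rw [← Finsupp.equivMapDomain_eq_mapDomain]
    ext p
    simp [hd]
  have key : MvPolynomial.coeff d (M.det ^ n) = -(MvPolynomial.coeff d (M.det ^ n)) := by
    conv_lhs => rw [← MvPolynomial.coeff_rename_mapDomain (⇑e) e.injective (M.det ^ n) d,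
      hdpow, hdmap, MvPolynomial.coeff_neg]
  linarith
end
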